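/- arXiv:2206.00107 — 3 statements merged into one kernel-verified Lean document; each statement's English description precedes it below -/
import Mathlib

section
/- With V the isometry from ℂ^d to (ℂ^d)^{⊗(d-1)} defined by V := (1/√((d-1)!)) Σ_{π∈S_d} sgn(π) ⟨π(1)| ⊗ |π(2)⟩⊗…⊗|π(d)⟩, for every U ∈ SU(d) one has V† U^{⊗(d-1)} V = Ū, where Ū is the entrywise complex conjugate of U in the standard basis. -/
open Matrix

/-- The isometry `V : ℂ^d → (ℂ^d)^{⊗(d-1)}` (here `d = n+1`), given by
`V = (1/√((d-1)!)) Σ_{π ∈ S_d} sgn(π) ⟨π(1)| ⊗ |π(2)⟩ ⊗ ⋯ ⊗ |π(d)⟩`. -/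
noncomputable def antisymIsometry (n : ℕ) :
    Matrix (Fin n → Fin (n + 1)) (Fin (n + 1)) ℂ :=
  Matrix.of fun g j => ((Real.sqrt (n.factorial) : ℂ))⁻¹ *
    ∑ π : Equiv.Perm (Fin (n + 1)),
      if j = π 0 ∧ ∀ i : Fin n, g i = π i.succ
      then ((Equiv.Perm.sign π : ℤ) : ℂ) else 0

/-- The tensor power `U^{⊗(d-1)}` acting on `(ℂ^d)^{⊗(d-1)}` (here `d = n+1`). -/
def tensorPow' (n : ℕ) (U : Matrix (Fin (n + 1)) (Fin (n + 1)) ℂ) :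
    Matrix (Fin n → Fin (n + 1)) (Fin n → Fin (n + 1)) ℂ :=
  Matrix.of fun f g => ∏ i : Fin n, U (f i) (g i)

open Finset Equiv

section aux
variable {n : ℕ}

lemma key_cofactor (U : Matrix (Fin (n + 1)) (Fin (n + 1)) ℂ)
    (hU : U ∈ Matrix.unitaryGroup (Fin (n + 1)) ℂ) (hdet : U.det = 1)
    (j k : Fin (n + 1)) :
    (∑ τ : Equiv.Perm (Fin (n + 1)), if j = τ k then
        ((Equiv.Perm.sign τ : ℤ) : ℂ) * ∏ m : Fin (n + 1), (if m = k then 1 else U (τ m) m) else 0)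
      = (starRingEnd ℂ) (U j k) := by
  have hUinv : U⁻¹ = star U := Matrix.inv_eq_left_inv hU.1
  have hadj : U.adjugate = star U := by
    rw [← hUinv, Matrix.inv_def, hdet]; simp
  have h2 : U.adjugate k j = (starRingEnd ℂ) (U j k) := by
    rw [hadj]; rfl
  rw [← h2, Matrix.adjugate_apply, Matrix.det_apply]
  apply Finset.sum_congr rfl
  intro τ _
  by_cases hτ : j = τ k
  · rw [if_pos hτ, Units.smul_def, zsmul_eq_mul]
    congr 1
    apply Finset.prod_congr rfl
    intro m _
    rw [Matrix.updateRow_apply]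
    by_cases hm : m = k
    · subst hm
      rw [if_pos rfl, if_pos hτ.symm, Pi.single_eq_same]
    · rw [if_neg hm, if_neg]
      intro h
      exact hm (τ.injective (h.trans hτ))
  · rw [if_neg hτ]
    have hz : (U.updateRow j (Pi.single k 1)) (τ (τ⁻¹ j)) (τ⁻¹ j) = 0 := by
      rw [Matrix.updateRow_apply, if_pos (by simp)]
      rw [Pi.single_eq_of_ne]
      · intro h
        exact hτ (by rw [← h]; simp)
    have hzero : (∏ i : Fin (n+1), (U.updateRow j (Pi.single k 1)) (τ i) i) = 0 :=
      Finset.prod_eq_zero (Finset.mem_univ (τ⁻¹ j)) hz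
    rw [hzero, smul_zero]

lemma prod_reindex (U : Matrix (Fin (n + 1)) (Fin (n + 1)) ℂ)
    (σ τ : Equiv.Perm (Fin (n + 1))) (k : Fin (n + 1)) (hσ : σ 0 = k) :
    (∏ i : Fin n, U (τ (σ i.succ)) (σ i.succ))
      = ∏ m : Fin (n + 1), (if m = k then 1 else U (τ m) m) := by
  rw [← Equiv.prod_comp σ (fun m => if m = k then (1:ℂ) else U (τ m) m),
    Fin.prod_univ_succ]
  rw [if_pos hσ, one_mul]
  apply Finset.prod_congr rfl
  intro i _
  rw [if_neg]
  intro h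
  exact (Fin.succ_ne_zero i) (σ.injective (h.trans hσ.symm))

lemma count_perm (k : Fin (n + 1)) :
    (∑ σ : Equiv.Perm (Fin (n + 1)), if k = σ 0 then (1:ℂ) else 0)
      = (n.factorial : ℂ) := by
  rw [← Equiv.sum_comp (Equiv.Perm.decomposeFin.symm :
    Fin (n+1) × Equiv.Perm (Fin n) ≃ Equiv.Perm (Fin (n+1)))
    (fun σ => if k = σ 0 then (1:ℂ) else 0)]
  rw [Fintype.sum_prod_type]
  simp only [Equiv.Perm.decomposeFin_symm_apply_zero]
  simp [Finset.sum_ite_eq, Fintype.card_perm]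

end aux

/-- For every `U ∈ SU(d)` (with `d = n+1`), `V† U^{⊗(d-1)} V = Ū`, the entrywise
complex conjugate of `U` in the standard basis. -/
theorem antisymIsometry_conjugation (n : ℕ) (U : Matrix (Fin (n + 1)) (Fin (n + 1)) ℂ)
    (hU : U ∈ Matrix.unitaryGroup (Fin (n + 1)) ℂ) (hdet : U.det = 1) :
    (antisymIsometry n)ᴴ * tensorPow' n U * antisymIsometry n
      = U.map (starRingEnd ℂ) := by
  set c : ℂ := ((Real.sqrt (n.factorial) : ℂ))⁻¹ with hcdef
  have hc : c * c * (n.factorial : ℂ) = 1 := by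
    rw [hcdef, ← mul_inv, ← Complex.ofReal_mul,
      Real.mul_self_sqrt (by positivity)]
    rw [show ((n.factorial : ℝ) : ℂ) = (n.factorial : ℂ) by push_cast; ring]
    exact inv_mul_cancel₀ (by exact_mod_cast n.factorial_ne_zero)
  ext j k
  have step1 : ((antisymIsometry n)ᴴ * tensorPow' n U * antisymIsometry n) j k
      = ∑ σ : Equiv.Perm (Fin (n+1)), ∑ π : Equiv.Perm (Fin (n+1)),
          (if k = σ 0 ∧ j = π 0 then
            c * c * ((Equiv.Perm.sign π : ℤ) : ℂ) * ((Equiv.Perm.sign σ : ℤ) : ℂ)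
              * ∏ i : Fin n, U (π i.succ) (σ i.succ) else 0) := by
    have collapse : ∀ (P : Prop) [inst : Decidable P] (a : Fin n → Fin (n+1))
        (F : (Fin n → Fin (n+1)) → ℂ),
        (∑ g : Fin n → Fin (n+1), if P ∧ ∀ i : Fin n, g i = a i then F g else 0)
          = if P then F a else 0 := by
      intro P inst a F
      rw [Finset.sum_eq_single a]
      · simp
      · intro g _ hg
        rw [if_neg]
        rintro ⟨-, h⟩
        exact hg (funext h)
      · intro h; exact absurd (Finset.mem_univ a) h
    have hVstar : ∀ g, star (antisymIsometry n g j) = antisymIsometry n g j := by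
      intro g
      simp [antisymIsometry, Complex.star_def, map_inv₀, Complex.conj_ofReal,
        map_sum, apply_ite (starRingEnd ℂ)]
    simp only [Matrix.mul_apply, Matrix.conjTranspose_apply, hVstar]
    have hB : ∀ g' : Fin n → Fin (n+1),
        (∑ g : Fin n → Fin (n+1), antisymIsometry n g j * tensorPow' n U g g')
          = c * ∑ π : Equiv.Perm (Fin (n+1)), (if j = π 0 then
              ((Equiv.Perm.sign π : ℤ) : ℂ) * ∏ i : Fin n, U (π i.succ) (g' i) else 0) := by
      intro g'
      simp only [antisymIsometry, tensorPow', Matrix.of_apply, ← hcdef]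
      simp only [mul_assoc, Finset.sum_mul, ite_mul, zero_mul]
      rw [← Finset.mul_sum, Finset.sum_comm]
      congr 1
      apply Finset.sum_congr rfl
      intro π _
      exact collapse (j = π 0) (fun i => π i.succ)
        (fun g => ((Equiv.Perm.sign π : ℤ) : ℂ) * ∏ i : Fin n, U (g i) (g' i))
    simp only [hB]
    simp only [antisymIsometry, Matrix.of_apply, ← hcdef]
    simp only [Finset.mul_sum, mul_ite, mul_zero]
    rw [Finset.sum_comm]
    apply Finset.sum_congr rfl
    intro σ _
    rw [collapse (k = σ 0) (fun i => σ i.succ)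
      (fun g' => (∑ π : Equiv.Perm (Fin (n+1)), if j = π 0 then
          c * (((Equiv.Perm.sign π : ℤ) : ℂ) * ∏ i : Fin n, U (π i.succ) (g' i)) else 0)
        * (c * ((Equiv.Perm.sign σ : ℤ) : ℂ)))]
    by_cases hσ : k = σ 0
    · rw [if_pos hσ, Finset.sum_mul]
      apply Finset.sum_congr rfl
      intro π _
      by_cases hj : j = π 0
      · rw [if_pos hj, if_pos ⟨hσ, hj⟩]; ring
      · rw [if_neg hj, if_neg (by tauto), zero_mul]
    · rw [if_neg hσ]
      symm
      apply Finset.sum_eq_zero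
      intro π _
      rw [if_neg (by tauto)]
  rw [step1]
  have step2 : ∀ σ : Equiv.Perm (Fin (n+1)),
      (∑ π : Equiv.Perm (Fin (n+1)),
          (if k = σ 0 ∧ j = π 0 then
            c * c * ((Equiv.Perm.sign π : ℤ) : ℂ) * ((Equiv.Perm.sign σ : ℤ) : ℂ)
              * ∏ i : Fin n, U (π i.succ) (σ i.succ) else 0))
      = (if k = σ 0 then (1:ℂ) else 0) *
          ∑ τ : Equiv.Perm (Fin (n+1)), (if j = τ k then
            c * c * ((Equiv.Perm.sign τ : ℤ) : ℂ)
              * ∏ m : Fin (n+1), (if m = k then 1 else U (τ m) m) else 0) := by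
    intro σ
    by_cases hσ : k = σ 0
    · rw [if_pos hσ, one_mul,
        ← Equiv.sum_comp (Equiv.mulRight σ) (fun π =>
          if k = σ 0 ∧ j = π 0 then
            c * c * ((Equiv.Perm.sign π : ℤ) : ℂ) * ((Equiv.Perm.sign σ : ℤ) : ℂ)
              * ∏ i : Fin n, U (π i.succ) (σ i.succ) else 0)]
      apply Finset.sum_congr rfl
      intro τ _
      simp only [Equiv.coe_mulRight, Equiv.Perm.mul_apply]
      change (if k = σ 0 ∧ j = τ (σ 0) then _ else _) = _
      by_cases hj : j = τ k
      · have hj' : j = τ (σ 0) := by rw [← hσ]; exact hj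
        rw [if_pos ⟨hσ, hj'⟩, if_pos hj,
          prod_reindex U σ τ k hσ.symm]
        have hsgn : ((Equiv.Perm.sign (τ * σ) : ℤ) : ℂ)
            = ((Equiv.Perm.sign τ : ℤ) : ℂ) * ((Equiv.Perm.sign σ : ℤ) : ℂ) := by
          rw [_root_.map_mul]; push_cast; ring
        rw [hsgn]
        have hss : ((Equiv.Perm.sign σ : ℤ) : ℂ) * ((Equiv.Perm.sign σ : ℤ) : ℂ) = 1 := by
          rcases Int.units_eq_one_or (Equiv.Perm.sign σ) with h | h <;> rw [h] <;> norm_num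
        linear_combination (c * c * ((Equiv.Perm.sign τ : ℤ) : ℂ)
          * ∏ m : Fin (n+1), (if m = k then (1:ℂ) else U (τ m) m)) * hss
      · rw [if_neg, if_neg hj]
        rintro ⟨-, h⟩
        exact hj (by rw [hσ]; exact h)
    · rw [if_neg hσ, zero_mul]
      apply Finset.sum_eq_zero
      intro π _
      rw [if_neg (by tauto)]
  simp only [step2]
  rw [← Finset.sum_mul, count_perm]
  have step3 : (∑ τ : Equiv.Perm (Fin (n+1)), (if j = τ k then
      c * c * ((Equiv.Perm.sign τ : ℤ) : ℂ)
        * ∏ m : Fin (n+1), (if m = k then 1 else U (τ m) m) else 0))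
      = c * c * ∑ τ : Equiv.Perm (Fin (n+1)), (if j = τ k then
          ((Equiv.Perm.sign τ : ℤ) : ℂ)
            * ∏ m : Fin (n+1), (if m = k then 1 else U (τ m) m) else 0) := by
    rw [Finset.mul_sum]
    apply Finset.sum_congr rfl
    intro τ _
    by_cases h : j = τ k
    · rw [if_pos h, if_pos h]; ring
    · rw [if_neg h, if_neg h]; ring
  rw [step3, key_cofactor U hU hdet j k, Matrix.map_apply]
  calc (n.factorial : ℂ) * (c * c * (starRingEnd ℂ) (U j k))
      = (c * c * (n.factorial : ℂ)) * (starRingEnd ℂ) (U j k) := by ring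
    _ = (starRingEnd ℂ) (U j k) := by rw [hc, one_mul]
end

section
/- For every partition λ of n with at most d rows, with n ≤ d, the ratio c(λ) := (Σ_{β ∈ λ} m_β)/m_λ satisfies c(λ) ≤ n/(d−n+1), with equality for λ = [1^{×n}]; here the sum is over all partitions β obtained from λ by removing one corner box, and m_μ is the dimension of the GL(d)-irreducible representation labeled by μ (number of semistandard Young tableaux of shape μ with entries ≤ d). -/
open Finset

/-- The number of semistandard Young tableaux of shape `μ` with entries in `{0, …, d-1}`
(equivalently, entries in `{1, …, d}`); this is the dimension `m_μ` of the `GL(d)`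
irreducible representation labeled by `μ`. -/
noncomputable def dimGL (d : ℕ) (μ : YoungDiagram) : ℕ :=
  Nat.card {T : SemistandardYoungTableau μ // ∀ i j : ℕ, (i, j) ∈ μ → T i j < d}

/-- The set of Young diagrams obtained from `μ` by removing a single (corner) box. -/
def oneBoxRemovals (μ : YoungDiagram) : Set YoungDiagram :=
  {β | β.cells ⊆ μ.cells ∧ β.cells.card + 1 = μ.cells.card}

/-- The ratio `c(λ) := (Σ_{β ∈ λ} m_β) / m_λ`. -/
noncomputable def cRatio (d : ℕ) (μ : YoungDiagram) : ℚ :=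
  (∑ᶠ β ∈ oneBoxRemovals μ, (dimGL d β : ℚ)) / (dimGL d μ : ℚ)

/-- The column Young diagram `[1^{×n}]`, with `n` rows of length 1. -/
def columnDiagram (n : ℕ) : YoungDiagram :=
  YoungDiagram.ofRowLens (List.replicate n 1) (List.sortedGE_iff_pairwise.2 (List.pairwise_replicate.2 (by simp)))


namespace CR
open scoped Classical


/-- columns lengths determine order -/
lemma le_iff_colLen {ν μ : YoungDiagram} : ν ≤ μ ↔ ∀ j, ν.colLen j ≤ μ.colLen j := by
  constructor
  · intro h j
    by_contra hc
    push_neg at hc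
    have h1 : (μ.colLen j, j) ∈ ν := by
      rw [YoungDiagram.mem_iff_lt_colLen]; exact hc
    have h2 : (μ.colLen j, j) ∈ μ := h h1
    rw [YoungDiagram.mem_iff_lt_colLen] at h2
    omega
  · intro h c hc
    obtain ⟨i, j⟩ := c
    have hc' : (i, j) ∈ ν := hc
    rw [YoungDiagram.mem_iff_lt_colLen] at hc'
    show (i, j) ∈ μ
    rw [YoungDiagram.mem_iff_lt_colLen]
    exact lt_of_lt_of_le hc' (h j)

lemma cells_injective : Function.Injective YoungDiagram.cells := by
  intro a b h
  cases a; cases b; simpa using h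

lemma eq_of_colLen_eq {ν μ : YoungDiagram} (h : ∀ j, ν.colLen j = μ.colLen j) : ν = μ :=
  le_antisymm (le_iff_colLen.2 fun j => (h j).le) (le_iff_colLen.2 fun j => (h j).ge)

lemma colLen_eq_of_iff {μ : YoungDiagram} {j k : ℕ} (h : ∀ i, (i, j) ∈ μ ↔ i < k) :
    μ.colLen j = k := by
  have h1 : ∀ i, i < μ.colLen j ↔ i < k := by
    intro i; rw [← YoungDiagram.mem_iff_lt_colLen]; exact h i
  have a := h1 k
  have b := h1 (μ.colLen j)
  omega

/-- number of cells as sum of column lengths -/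
lemma card_eq_sum_colLens (μ : YoungDiagram) {W : ℕ} (hW : μ.rowLen 0 ≤ W) :
    μ.cells.card = ∑ j ∈ range W, μ.colLen j := by
  have hcover : μ.cells = (range W).biUnion (fun j => μ.col j) := by
    ext c
    simp only [Finset.mem_biUnion, Finset.mem_range, YoungDiagram.mem_col_iff]
    constructor
    · intro hc
      refine ⟨c.2, ?_, ?_, rfl⟩
      · have h0 : (0, c.2) ∈ μ := μ.up_left_mem (Nat.zero_le _) le_rfl (by
          rw [YoungDiagram.mem_cells] at hc; exact (show (c.1, c.2) ∈ μ by simpa using hc))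
        rw [YoungDiagram.mem_iff_lt_rowLen] at h0
        omega
      · rwa [YoungDiagram.mem_cells] at hc
    · rintro ⟨j, _, hc, rfl⟩
      rwa [YoungDiagram.mem_cells]
  rw [hcover, Finset.card_biUnion]
  · exact Finset.sum_congr rfl fun j _ => (μ.colLen_eq_card).symm
  · intro x _ y _ hxy
    simp only [Finset.disjoint_left, YoungDiagram.mem_col_iff]
    rintro c ⟨_, h1⟩ ⟨_, h2⟩
    exact hxy (h1.symm.trans h2)

lemma colLen_le_card (μ : YoungDiagram) (j : ℕ) : μ.colLen j ≤ μ.cells.card := by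
  rw [μ.colLen_eq_card]
  exact Finset.card_le_card (fun c hc => (YoungDiagram.mem_col_iff.1 hc).1)

lemma bot_of_colLen_zero {μ : YoungDiagram} (h : μ.colLen 0 = 0) : μ = ⊥ := by
  ext c
  simp only [YoungDiagram.cells_bot, Finset.notMem_empty, iff_false]
  intro hc
  obtain ⟨i, j⟩ := c
  have h0 : (0, 0) ∈ μ := μ.up_left_mem (Nat.zero_le _) (Nat.zero_le _)
    (by rwa [YoungDiagram.mem_cells] at hc)
  rw [YoungDiagram.mem_iff_lt_colLen] at h0
  omega



lemma entry_le_entry {μ : YoungDiagram} (T : SemistandardYoungTableau μ) {i1 i2 j1 j2 : ℕ}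
    (hi : i1 ≤ i2) (hj : j1 ≤ j2) (h : (i2, j2) ∈ μ) : T i1 j1 ≤ T i2 j2 :=
  le_trans (T.col_weak hi (μ.up_left_mem le_rfl hj h)) (T.row_weak_of_le hj h)

instance finiteBT (d : ℕ) (μ : YoungDiagram) :
    Finite {T : SemistandardYoungTableau μ // ∀ i j : ℕ, (i, j) ∈ μ → T i j < d} := by
  apply Finite.of_injective
    (f := fun T (c : ↥μ.cells) => (⟨T.1 c.1.1 c.1.2,
      T.2 c.1.1 c.1.2 (by rw [← YoungDiagram.mem_cells]; exact c.2)⟩ : Fin d))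
  intro T T' h
  apply Subtype.ext
  ext i j
  by_cases hc : (i, j) ∈ μ
  · have := congrFun h ⟨(i, j), (YoungDiagram.mem_cells _).2 hc⟩
    exact congrArg Fin.val this
  · rw [T.1.zeros hc, T'.1.zeros hc]

lemma finite_sub (μ : YoungDiagram) : {ν : YoungDiagram | ν ≤ μ}.Finite := by
  apply Set.Finite.subset
    (Set.Finite.preimage cells_injective.injOn μ.cells.powerset.finite_toSet)
  intro ν hν
  simp only [Set.mem_preimage, Finset.coe_powerset, Set.mem_setOf_eq, Finset.mem_coe,
    Finset.mem_powerset]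
  exact YoungDiagram.cells_subset_iff.2 hν

noncomputable def allSub (μ : YoungDiagram) : Finset YoungDiagram := (finite_sub μ).toFinset

@[simp] lemma mem_allSub {μ ν : YoungDiagram} : ν ∈ allSub μ ↔ ν ≤ μ := by
  simp [allSub, Set.Finite.mem_toFinset]

lemma finite_hs (μ : YoungDiagram) :
    {ν : YoungDiagram | ν ≤ μ ∧ ∀ j, μ.colLen j ≤ ν.colLen j + 1}.Finite :=
  (finite_sub μ).subset (fun _ h => h.1)

noncomputable def hstrips (μ : YoungDiagram) : Finset YoungDiagram := (finite_hs μ).toFinset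

lemma mem_hstrips {μ ν : YoungDiagram} :
    ν ∈ hstrips μ ↔ ν ≤ μ ∧ ∀ j, μ.colLen j ≤ ν.colLen j + 1 := by
  simp [hstrips, Set.Finite.mem_toFinset]

open scoped Classical in
noncomputable def mrec : ℕ → YoungDiagram → ℕ
  | 0, μ => if μ = ⊥ then 1 else 0
  | (d+1), μ => ∑ ν ∈ hstrips μ, mrec d ν

lemma mrec_zero (μ : YoungDiagram) : mrec 0 μ = if μ = ⊥ then 1 else 0 := by rw [mrec]

lemma mrec_succ (d : ℕ) (μ : YoungDiagram) : mrec (d + 1) μ = ∑ ν ∈ hstrips μ, mrec d ν := by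
  rw [mrec]

/-! ### the branching bijection -/

def lowerPart (d : ℕ) {μ : YoungDiagram} (T : SemistandardYoungTableau μ) : YoungDiagram :=
  ⟨μ.cells.filter (fun c => T c.1 c.2 < d), by
    intro c2 c1 hle hc2
    simp only [Finset.coe_filter, Set.mem_setOf_eq, Finset.mem_coe] at hc2 ⊢
    obtain ⟨hc2m, hc2v⟩ := hc2
    rw [YoungDiagram.mem_cells] at hc2m
    have hm : c1 ∈ μ := μ.up_left_mem hle.1 hle.2 hc2m
    refine ⟨(YoungDiagram.mem_cells _).2 hm, lt_of_le_of_lt ?_ hc2v⟩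
    exact entry_le_entry T hle.1 hle.2 hc2m⟩

lemma mem_lowerPart {d : ℕ} {μ : YoungDiagram} {T : SemistandardYoungTableau μ} {c : ℕ × ℕ} :
    c ∈ lowerPart d T ↔ c ∈ μ ∧ T c.1 c.2 < d := by
  show c ∈ Finset.filter _ _ ↔ _
  simp [Finset.mem_filter, YoungDiagram.mem_cells]

lemma lowerPart_mem_hstrips {d : ℕ} {μ : YoungDiagram} (T : SemistandardYoungTableau μ)
    (hT : ∀ i j : ℕ, (i, j) ∈ μ → T i j < d + 1) : lowerPart d T ∈ hstrips μ := by
  rw [mem_hstrips]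
  constructor
  · intro c hc
    have := (mem_lowerPart (c := c)).1 (by exact hc)
    exact this.1
  · intro j
    set K := (lowerPart d T).colLen j with hK
    by_contra hcon
    push_neg at hcon
    have hK1μ : (K + 1, j) ∈ μ := YoungDiagram.mem_iff_lt_colLen.2 (by omega)
    have hKμ : (K, j) ∈ μ := μ.up_left_mem (by omega) le_rfl hK1μ
    have hKn : (K, j) ∉ lowerPart d T := by
      rw [YoungDiagram.mem_iff_lt_colLen]; omega
    have hK1n : (K + 1, j) ∉ lowerPart d T := by
      rw [YoungDiagram.mem_iff_lt_colLen]; omega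
    have h1 : ¬ T K j < d := fun h => hKn (mem_lowerPart.2 ⟨hKμ, h⟩)
    have h2 : ¬ T (K+1) j < d := fun h => hK1n (mem_lowerPart.2 ⟨hK1μ, h⟩)
    have h3 : T K j < T (K+1) j := T.col_strict (by omega) hK1μ
    have h4 := hT (K+1) j hK1μ
    omega

def restrictT (d : ℕ) {μ : YoungDiagram} (T : SemistandardYoungTableau μ) :
    SemistandardYoungTableau (lowerPart d T) where
  entry i j := if (i, j) ∈ lowerPart d T then T i j else 0
  row_weak' := by
    intro i j1 j2 hj hc
    have hc1 : (i, j1) ∈ lowerPart d T :=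
      (lowerPart d T).up_left_mem le_rfl hj.le hc
    rw [if_pos hc, if_pos hc1]
    exact T.row_weak hj (mem_lowerPart.1 hc).1
  col_strict' := by
    intro i1 i2 j hi hc
    have hc1 : (i1, j) ∈ lowerPart d T :=
      (lowerPart d T).up_left_mem hi.le le_rfl hc
    rw [if_pos hc, if_pos hc1]
    exact T.col_strict hi (mem_lowerPart.1 hc).1
  zeros' := by
    intro i j h
    rw [if_neg h]

lemma restrictT_bdd (d : ℕ) {μ : YoungDiagram} (T : SemistandardYoungTableau μ) :
    ∀ i j : ℕ, (i, j) ∈ lowerPart d T → restrictT d T i j < d := by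
  intro i j h
  show (if (i, j) ∈ lowerPart d T then T i j else 0) < d
  rw [if_pos h]
  exact (mem_lowerPart.1 h).2

def extendT (d : ℕ) {μ ν : YoungDiagram} (S : SemistandardYoungTableau ν)
    (hle : ν ≤ μ) (hcol : ∀ j, μ.colLen j ≤ ν.colLen j + 1)
    (hS : ∀ i j : ℕ, (i, j) ∈ ν → S i j < d) :
    SemistandardYoungTableau μ where
  entry i j := if (i, j) ∈ ν then S i j else if (i, j) ∈ μ then d else 0
  row_weak' := by
    intro i j1 j2 hj hc
    have hc1 : (i, j1) ∈ μ := μ.up_left_mem le_rfl hj.le hc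
    by_cases h2 : (i, j2) ∈ ν
    · have h1 : (i, j1) ∈ ν := ν.up_left_mem le_rfl hj.le h2
      rw [if_pos h1, if_pos h2]
      exact S.row_weak hj h2
    · rw [if_neg h2, if_pos hc]
      by_cases h1 : (i, j1) ∈ ν
      · rw [if_pos h1]; exact (hS _ _ h1).le
      · rw [if_neg h1, if_pos hc1]
  col_strict' := by
    intro i1 i2 j hi hc
    have hc1 : (i1, j) ∈ μ := μ.up_left_mem hi.le le_rfl hc
    by_cases h2 : (i2, j) ∈ ν
    · have h1 : (i1, j) ∈ ν := ν.up_left_mem hi.le le_rfl h2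
      rw [if_pos h1, if_pos h2]
      exact S.col_strict hi h2
    · rw [if_neg h2, if_pos hc]
      by_cases h1 : (i1, j) ∈ ν
      · rw [if_pos h1]; exact hS _ _ h1
      · exfalso
        rw [YoungDiagram.mem_iff_lt_colLen] at hc h1
        have := hcol j
        omega
  zeros' := by
    intro i j h
    have hn : (i, j) ∉ ν := fun hc => h (hle hc)
    rw [if_neg hn, if_neg h]

lemma extendT_bdd (d : ℕ) {μ ν : YoungDiagram} (S : SemistandardYoungTableau ν)
    (hle : ν ≤ μ) (hcol : ∀ j, μ.colLen j ≤ ν.colLen j + 1)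
    (hS : ∀ i j : ℕ, (i, j) ∈ ν → S i j < d) :
    ∀ i j : ℕ, (i, j) ∈ μ → extendT d S hle hcol hS i j < d + 1 := by
  intro i j h
  show (if (i, j) ∈ ν then S i j else if (i, j) ∈ μ then d else 0) < d + 1
  by_cases h1 : (i, j) ∈ ν
  · rw [if_pos h1]; exact lt_trans (hS _ _ h1) (by omega)
  · rw [if_neg h1, if_pos h]; omega

lemma extendT_apply (d : ℕ) {μ ν : YoungDiagram} (S : SemistandardYoungTableau ν)
    (hle : ν ≤ μ) (hcol : ∀ j, μ.colLen j ≤ ν.colLen j + 1)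
    (hS : ∀ i j : ℕ, (i, j) ∈ ν → S i j < d) (i j : ℕ) :
    extendT d S hle hcol hS i j = if (i, j) ∈ ν then S i j else if (i, j) ∈ μ then d else 0 := rfl

lemma sigma_helper {d : ℕ} {μ : YoungDiagram} (ν1 ν2 : YoungDiagram)
    (h1 : ν1 ∈ hstrips μ) (h2 : ν2 ∈ hstrips μ)
    (S1 : SemistandardYoungTableau ν1) (S2 : SemistandardYoungTableau ν2)
    (hS1 : ∀ i j : ℕ, (i, j) ∈ ν1 → S1 i j < d) (hS2 : ∀ i j : ℕ, (i, j) ∈ ν2 → S2 i j < d)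
    (he : ν1 = ν2) (hent : ∀ i j, S1 i j = S2 i j) :
    (⟨⟨ν1, h1⟩, ⟨S1, hS1⟩⟩ : Σ ν : (hstrips μ), {S : SemistandardYoungTableau (ν : YoungDiagram) //
      ∀ i j : ℕ, (i, j) ∈ (ν : YoungDiagram) → S i j < d}) = ⟨⟨ν2, h2⟩, ⟨S2, hS2⟩⟩ := by
  subst he
  have hSe : S1 = S2 := SemistandardYoungTableau.ext hent
  subst hSe
  rfl

theorem dimGL_succ (d : ℕ) (μ : YoungDiagram) :
    dimGL (d + 1) μ = ∑ ν ∈ hstrips μ, dimGL d ν := by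
  classical
  have e : {T : SemistandardYoungTableau μ // ∀ i j : ℕ, (i, j) ∈ μ → T i j < d + 1} ≃
      Σ ν : (hstrips μ), {S : SemistandardYoungTableau (ν : YoungDiagram) //
        ∀ i j : ℕ, (i, j) ∈ (ν : YoungDiagram) → S i j < d} := by
    refine
      { toFun := fun T => ⟨⟨lowerPart d T.1, lowerPart_mem_hstrips T.1 T.2⟩,
          ⟨restrictT d T.1, restrictT_bdd d T.1⟩⟩
        invFun := fun p =>
          ⟨extendT d p.2.1 ((mem_hstrips.1 p.1.2).1) ((mem_hstrips.1 p.1.2).2) p.2.2,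
            extendT_bdd d p.2.1 _ _ _⟩
        left_inv := ?_
        right_inv := ?_ }
    · intro T
      apply Subtype.ext
      ext i j
      rw [extendT_apply]
      by_cases h1 : (i, j) ∈ lowerPart d T.1
      · rw [if_pos h1]
        show (if (i, j) ∈ lowerPart d T.1 then T.1 i j else 0) = T.1 i j
        rw [if_pos h1]
      · rw [if_neg h1]
        by_cases h2 : (i, j) ∈ μ
        · rw [if_pos h2]
          have hn : ¬ T.1 i j < d := fun h => h1 (mem_lowerPart.2 ⟨h2, h⟩)
          have h3 := T.2 i j h2
          omega
        · rw [if_neg h2, T.1.zeros h2]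
    · rintro ⟨⟨ν, hν⟩, S, hS⟩
      obtain ⟨hle, hcol⟩ := mem_hstrips.1 hν
      set T := extendT d S hle hcol hS with hTdef
      have hcells : lowerPart d T = ν := by
        apply cells_injective
        ext c
        obtain ⟨i, j⟩ := c
        rw [YoungDiagram.mem_cells, YoungDiagram.mem_cells, mem_lowerPart]
        constructor
        · rintro ⟨h1, h2⟩
          by_contra h3
          rw [extendT_apply, if_neg h3, if_pos h1] at h2
          omega
        · intro h1
          refine ⟨hle h1, ?_⟩
          rw [extendT_apply, if_pos h1]
          exact hS _ _ h1
      have hent : ∀ i j, (restrictT d T) i j = S i j := by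
        intro i j
        show (if (i, j) ∈ lowerPart d T then T i j else 0) = S i j
        by_cases h1 : (i, j) ∈ ν
        · rw [if_pos (by rw [hcells]; exact h1)]
          rw [extendT_apply, if_pos h1]
        · rw [if_neg (by rw [hcells]; exact h1), S.zeros h1]
      exact sigma_helper _ _ _ _ _ _ _ _ hcells hent
  unfold dimGL
  rw [Nat.card_congr e]
  haveI F : ∀ ν : (hstrips μ), Fintype {S : SemistandardYoungTableau (ν : YoungDiagram) //
      ∀ i j : ℕ, (i, j) ∈ (ν : YoungDiagram) → S i j < d} := fun ν => Fintype.ofFinite _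
  rw [Nat.card_eq_fintype_card, Fintype.card_sigma,
    ← Finset.sum_coe_sort (hstrips μ) (fun ν => Nat.card
      {S : SemistandardYoungTableau ν // ∀ i j : ℕ, (i, j) ∈ ν → S i j < d})]
  exact Finset.sum_congr rfl fun ν _ => (Nat.card_eq_fintype_card).symm



lemma dimGL_zero (μ : YoungDiagram) : dimGL 0 μ = if μ = ⊥ then 1 else 0 := by
  unfold dimGL
  split_ifs with h
  · subst h
    haveI : Unique {T : SemistandardYoungTableau (⊥ : YoungDiagram) //
        ∀ i j : ℕ, (i, j) ∈ (⊥ : YoungDiagram) → T i j < 0} := by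
      refine ⟨⟨⟨⟨fun _ _ => 0, ?_, ?_, ?_⟩, ?_⟩⟩, ?_⟩
      · intro i j1 j2 _ hc; exact absurd hc (YoungDiagram.notMem_bot _)
      · intro i1 i2 j _ hc; exact absurd hc (YoungDiagram.notMem_bot _)
      · intro i j _; rfl
      · intro i j hc; exact absurd hc (YoungDiagram.notMem_bot _)
      · rintro ⟨T, hT⟩
        apply Subtype.ext
        apply SemistandardYoungTableau.ext
        intro i j
        rw [T.zeros (YoungDiagram.notMem_bot _)]
        rfl
    rw [Nat.card_eq_one_iff_unique]
    exact ⟨inferInstance, inferInstance⟩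
  · have hne : (0, 0) ∈ μ := by
      by_contra hc
      apply h
      ext c
      simp only [YoungDiagram.cells_bot, Finset.notMem_empty, iff_false]
      intro hcm
      exact hc (μ.up_left_mem (Nat.zero_le _) (Nat.zero_le _) ((YoungDiagram.mem_cells _).1 hcm))
    haveI : IsEmpty {T : SemistandardYoungTableau μ // ∀ i j : ℕ, (i, j) ∈ μ → T i j < 0} := by
      constructor
      rintro ⟨T, hT⟩
      exact Nat.not_lt_zero _ (hT 0 0 hne)
    exact Nat.card_of_isEmpty

/-! ### corners and erasing -/

noncomputable def corners (μ : YoungDiagram) : Finset (ℕ × ℕ) :=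
  μ.cells.filter (fun c => (c.1 + 1, c.2) ∉ μ ∧ (c.1, c.2 + 1) ∉ μ)

lemma mem_corners {μ : YoungDiagram} {c : ℕ × ℕ} :
    c ∈ corners μ ↔ c ∈ μ ∧ (c.1 + 1, c.2) ∉ μ ∧ (c.1, c.2 + 1) ∉ μ := by
  simp [corners, YoungDiagram.mem_cells]

lemma mem_corners_iff_colLen {μ : YoungDiagram} {i j : ℕ} :
    (i, j) ∈ corners μ ↔ i + 1 = μ.colLen j ∧ μ.colLen (j + 1) < μ.colLen j := by
  rw [mem_corners]
  simp only [YoungDiagram.mem_iff_lt_colLen, not_lt]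
  constructor
  · rintro ⟨h1, h2, h3⟩
    have h4 : i < μ.colLen (j + 1) → False := by
      intro hc
      have : (i, j + 1) ∈ μ := YoungDiagram.mem_iff_lt_colLen.2 hc
      rw [YoungDiagram.mem_iff_lt_colLen] at this
      omega
    constructor
    · omega
    · by_contra hc
      push_neg at hc
      have h5 := μ.colLen_anti j (j + 1) (by omega)
      have h6 : μ.colLen (j+1) = μ.colLen j := le_antisymm h5 hc
      omega
  · rintro ⟨h1, h2⟩
    exact ⟨by omega, by omega, by omega⟩

noncomputable def eraseC (μ : YoungDiagram) (c : ℕ × ℕ) : YoungDiagram :=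
  if h : c ∈ corners μ then
    ⟨μ.cells.erase c, by
      intro c2 c1 hle hc2
      simp only [Finset.coe_erase, Set.mem_diff, Finset.mem_coe, Set.mem_singleton_iff] at hc2 ⊢
      obtain ⟨hc2m, hc2ne⟩ := hc2
      rw [YoungDiagram.mem_cells] at hc2m
      have h1 : c1 ∈ μ := μ.up_left_mem hle.1 hle.2 hc2m
      refine ⟨(YoungDiagram.mem_cells _).2 h1, ?_⟩
      rintro rfl
      rw [mem_corners] at h
      rcases lt_or_eq_of_le hle.1 with h2 | h2
      · exact h.2.1 (μ.up_left_mem h2 hle.2 hc2m)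
      · rcases lt_or_eq_of_le hle.2 with h3 | h3
        · exact h.2.2 (μ.up_left_mem (le_of_eq h2) h3 hc2m)
        · exact hc2ne (Prod.ext h2 h3).symm⟩
  else μ

lemma eraseC_cells {μ : YoungDiagram} {c : ℕ × ℕ} (h : c ∈ corners μ) :
    (eraseC μ c).cells = μ.cells.erase c := by
  rw [eraseC, dif_pos h]

lemma mem_eraseC {μ : YoungDiagram} {c : ℕ × ℕ} (h : c ∈ corners μ) {x : ℕ × ℕ} :
    x ∈ eraseC μ c ↔ x ∈ μ ∧ x ≠ c := by
  rw [← YoungDiagram.mem_cells, eraseC_cells h, Finset.mem_erase, ← YoungDiagram.mem_cells]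
  tauto

lemma eraseC_le {μ : YoungDiagram} (c : ℕ × ℕ) : eraseC μ c ≤ μ := by
  by_cases h : c ∈ corners μ
  · rw [← YoungDiagram.cells_subset_iff, eraseC_cells h]
    exact Finset.erase_subset _ _
  · rw [eraseC, dif_neg h]

lemma colLen_eraseC {μ : YoungDiagram} {c : ℕ × ℕ} (h : c ∈ corners μ) (j : ℕ) :
    (eraseC μ c).colLen j = if j = c.2 then μ.colLen j - 1 else μ.colLen j := by
  obtain ⟨i0, j0⟩ := c
  dsimp only
  have hc := mem_corners_iff_colLen.1 h
  have key : ∀ i, (i, j) ∈ eraseC μ (i0, j0) ↔ i < (if j = j0 then μ.colLen j - 1 else μ.colLen j) := by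
    intro i
    rw [mem_eraseC h, YoungDiagram.mem_iff_lt_colLen]
    split_ifs with hj
    · subst hj
      constructor
      · rintro ⟨h1, h2⟩
        have : i ≠ i0 := fun hne => h2 (by rw [hne])
        omega
      · intro h1
        exact ⟨by omega, by simp only [ne_eq, Prod.mk.injEq]; omega⟩
    · constructor
      · rintro ⟨h1, _⟩; exact h1
      · intro h1
        exact ⟨h1, by simp only [ne_eq, Prod.mk.injEq]; tauto⟩
  -- conclude colLen equality
  have h1 := key ((eraseC μ (i0, j0)).colLen j)
  have h2 := key (if j = j0 then μ.colLen j - 1 else μ.colLen j)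
  simp only [YoungDiagram.mem_iff_lt_colLen] at h1 h2
  omega



variable (L N : ℕ → ℕ)

def ACond (j : ℕ) : Prop :=
  N j < L j ∧ L (j + 1) < L j ∧ L j ≤ N j + 2 ∧ ∀ j', j' ≠ j → L j' ≤ N j' + 1

def BCond (j : ℕ) : Prop :=
  N j < L j ∧ (j = 0 ∨ N j < N (j - 1)) ∧ L j ≤ N j + 2 ∧ ∀ j', j' ≠ j → L j' ≤ N j' + 1

theorem local_id (d : ℕ) (W : ℕ)
    (hLa : ∀ j, L (j + 1) ≤ L j) (hNa : ∀ j, N (j + 1) ≤ N j)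
    (hLN : ∀ j, N j ≤ L j) (hW : ∀ j, W ≤ j → L j = 0) :
    ∑ j ∈ (range W).filter (ACond L N), ((d : ℤ) + 2 + j - L j)
      = ∑ j ∈ (range W).filter (BCond L N), ((d : ℤ) + j - N j)
        + (if ∀ j, L j ≤ N j + 1 then ∑ j ∈ range W, ((L j : ℤ) - N j) else 0) := by
  classical
  have hNaLe : ∀ {j1 j2 : ℕ}, j1 ≤ j2 → N j2 ≤ N j1 := by
    intro j1 j2 h
    exact antitone_nat_of_succ_le hNa h
  have hLaLe : ∀ {j1 j2 : ℕ}, j1 ≤ j2 → L j2 ≤ L j1 := by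
    intro j1 j2 h
    exact antitone_nat_of_succ_le hLa h
  set Bad : Finset ℕ := (range W).filter (fun j => N j + 2 ≤ L j) with hBad
  have memBad : ∀ j, j ∈ Bad ↔ N j + 2 ≤ L j := by
    intro j
    simp only [hBad, Finset.mem_filter, Finset.mem_range]
    constructor
    · tauto
    · intro h
      refine ⟨?_, h⟩
      by_contra hc
      have := hW j (by omega)
      omega
  rcases Finset.eq_empty_or_nonempty Bad with hB | ⟨j0, hj0⟩
  · -- horizontal strip case
    have hstrip : ∀ j, L j ≤ N j + 1 := by
      intro j
      by_contra hc
      rw [Finset.eq_empty_iff_forall_notMem] at hB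
      exact hB j ((memBad j).2 (by omega))
    rw [if_pos hstrip]
    set S : Finset ℕ := (range W).filter (fun j => N j < L j) with hS
    have memS : ∀ j, j ∈ S ↔ N j < L j := by
      intro j
      simp only [hS, Finset.mem_filter, Finset.mem_range]
      constructor
      · tauto
      · intro h
        refine ⟨?_, h⟩
        by_contra hc
        have := hW j (by omega)
        omega
    have hAfilter : (range W).filter (ACond L N) = S.filter (fun j => L (j + 1) < L j) := by
      ext j
      simp only [Finset.mem_filter, Finset.mem_range, ACond, hS]
      constructor
      · rintro ⟨h1, h2, h3, _⟩; exact ⟨⟨h1, h2⟩, h3⟩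
      · rintro ⟨⟨h1, h2⟩, h3⟩
        exact ⟨h1, h2, h3, (by have := hstrip j; omega), fun j' _ => hstrip j'⟩
    have hBfilter : (range W).filter (BCond L N) =
        S.filter (fun j => j = 0 ∨ N j < N (j - 1)) := by
      ext j
      simp only [Finset.mem_filter, Finset.mem_range, BCond, hS]
      constructor
      · rintro ⟨h1, h2, h3, _⟩; exact ⟨⟨h1, h2⟩, h3⟩
      · rintro ⟨⟨h1, h2⟩, h3⟩
        exact ⟨h1, h2, h3, (by have := hstrip j; omega), fun j' _ => hstrip j'⟩
    have hCsum : ∑ j ∈ range W, ((L j : ℤ) - N j) = S.card := by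
      rw [Finset.card_filter]
      push_cast
      apply Finset.sum_congr rfl
      intro j _
      have h1 := hstrip j
      have h2 := hLN j
      by_cases h : N j < L j
      · rw [if_pos h]; omega
      · rw [if_neg h]; omega
    -- weights on S
    have hwA : ∀ j ∈ S.filter (fun j => L (j + 1) < L j),
        ((d : ℤ) + 2 + j - L j) = ((d : ℤ) + j - N j) + 1 := by
      intro j hj
      rw [Finset.mem_filter] at hj
      have h1 := (memS j).1 hj.1
      have h2 := hstrip j
      have : L j = N j + 1 := by omega
      rw [this]
      push_cast
      ring
    -- the key bijection between non-corner and non-addable strip columns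
    have hbij : ∑ j ∈ S.filter (fun j => ¬(j = 0 ∨ N j < N (j - 1))), ((d : ℤ) + j - N j)
        = ∑ j ∈ S.filter (fun j => ¬ L (j + 1) < L j), (((d : ℤ) + j - N j) + 1) := by
      apply Finset.sum_nbij' (i := fun j => j - 1) (j := fun j => j + 1)
      · -- maps into
        intro j hj
        rw [Finset.mem_filter] at hj ⊢
        obtain ⟨hjS, hjadd⟩ := hj
        push_neg at hjadd
        obtain ⟨hjne, hmon⟩ := hjadd
        have h1 := (memS j).1 hjS
        have h2 : N (j - 1) = N j := le_antisymm (by omega) (hNaLe (by omega))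
        have h3 : L (j - 1) ≤ N (j - 1) + 1 := hstrip (j - 1)
        have h4 : L j ≤ L (j - 1) := hLaLe (by omega)
        have h5 : L j = N j + 1 := by have := hstrip j; omega
        have h6 : L (j - 1) = L j := by omega
        have h7 : j - 1 + 1 = j := by omega
        constructor
        · rw [memS]; omega
        · rw [h7]; omega
      · -- inverse direction maps into
        intro j hj
        rw [Finset.mem_filter] at hj ⊢
        obtain ⟨hjS, hjcor⟩ := hj
        push_neg at hjcor
        have h1 := (memS j).1 hjS
        have h2 : L (j + 1) = L j := le_antisymm (hLa j) hjcor
        have h5 : L j = N j + 1 := by have := hstrip j; omega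
        have h3 : L (j + 1) ≤ N (j + 1) + 1 := hstrip (j + 1)
        have h4 : N (j + 1) ≤ N j := hNa j
        have h6 : N (j + 1) = N j := by omega
        constructor
        · rw [memS]; omega
        · push_neg
          constructor
          · omega
          · simp only [Nat.add_sub_cancel]; omega
      · -- left inverse
        intro j hj
        rw [Finset.mem_filter] at hj
        push_neg at hj
        omega
      · -- right inverse
        intro j _
        omega
      · -- values match
        intro j hj
        rw [Finset.mem_filter] at hj
        push_neg at hj
        have h1 : ((j : ℤ) - 1) = ((j - 1 : ℕ) : ℤ) := by
          have := hj.2.1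
          push_cast [Nat.cast_sub (by omega : 1 ≤ j)]
          ring
        have h2 : N (j - 1) = N j := by
          have := hj.2.2
          have := hNaLe (show j - 1 ≤ j by omega)
          omega
        rw [← h1, h2]
        ring
    -- put it together
    rw [hAfilter, hBfilter, hCsum]
    rw [Finset.sum_congr rfl hwA]
    have split1 : ∑ j ∈ S, ((d : ℤ) + j - N j)
        = ∑ j ∈ S.filter (fun j => j = 0 ∨ N j < N (j - 1)), ((d : ℤ) + j - N j)
          + ∑ j ∈ S.filter (fun j => ¬(j = 0 ∨ N j < N (j - 1))), ((d : ℤ) + j - N j) :=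
      (Finset.sum_filter_add_sum_filter_not S _ _).symm
    have split2 : ∑ j ∈ S, ((d : ℤ) + j - N j)
        = ∑ j ∈ S.filter (fun j => L (j + 1) < L j), ((d : ℤ) + j - N j)
          + ∑ j ∈ S.filter (fun j => ¬ L (j + 1) < L j), ((d : ℤ) + j - N j) :=
      (Finset.sum_filter_add_sum_filter_not S _ _).symm
    have csplit : (S.filter (fun j => L (j + 1) < L j)).card
          + (S.filter (fun j => ¬ L (j + 1) < L j)).card = S.card :=
      Finset.card_filter_add_card_filter_not _
    have hsum1 : ∀ (t : Finset ℕ), ∑ j ∈ t, (((d : ℤ) + j - N j) + 1)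
        = ∑ j ∈ t, ((d : ℤ) + j - N j) + t.card := by
      intro t
      rw [Finset.sum_add_distrib]
      simp
    have e1 := hsum1 (S.filter (fun j => L (j + 1) < L j))
    have e2 := hsum1 (S.filter (fun j => ¬ L (j + 1) < L j))
    have csplit' : ((S.filter (fun j => L (j + 1) < L j)).card : ℤ)
        + ((S.filter (fun j => ¬ L (j + 1) < L j)).card : ℤ) = (S.card : ℤ) := by
      exact_mod_cast csplit
    linarith [split1, split2, hbij, e1, e2, csplit']
  · -- there is a bad column j0
    have hj0' := (memBad j0).1 hj0
    have hnotall : ¬ ∀ j, L j ≤ N j + 1 := by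
      push_neg
      exact ⟨j0, by omega⟩
    rw [if_neg hnotall, add_zero]
    by_cases huniq : ∀ j1 ∈ Bad, j1 = j0
    · -- unique bad column
      by_cases h3 : L j0 = N j0 + 2
      · -- exactly 2: singleton sums
        have hothers : ∀ j', j' ≠ j0 → L j' ≤ N j' + 1 := by
          intro j' hne
          by_contra hc
          exact hne (huniq j' ((memBad j').2 (by omega)))
        have hA : (range W).filter (ACond L N) = {j0} := by
          ext j
          simp only [Finset.mem_filter, Finset.mem_range, Finset.mem_singleton, ACond]
          constructor
          · rintro ⟨_, h1, h2, h4, h5⟩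
            by_contra hne
            have := h5 j0 (fun hc => hne (by omega))
            omega
          · rintro rfl
            refine ⟨?_, by omega, ?_, by omega, hothers⟩
            · by_contra hc
              have := hW j (by omega)
              omega
            · have h5 := hothers (j + 1) (by omega)
              have h6 := hNa j
              omega
        have hBf : (range W).filter (BCond L N) = {j0} := by
          ext j
          simp only [Finset.mem_filter, Finset.mem_range, Finset.mem_singleton, BCond]
          constructor
          · rintro ⟨_, h1, h2, h4, h5⟩
            by_contra hne
            have := h5 j0 (fun hc => hne (by omega))
            omega
          · rintro rfl
            refine ⟨?_, by omega, ?_, by omega, hothers⟩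
            · by_contra hc
              have := hW j (by omega)
              omega
            · rcases Nat.eq_zero_or_pos j with h | h
              · left; exact h
              · right
                have h5 := hothers (j - 1) (by omega)
                have h6 := hLaLe (show j - 1 ≤ j by omega)
                omega
        rw [hA, hBf, Finset.sum_singleton, Finset.sum_singleton]
        rw [h3]
        push_cast
        ring
      · -- L j0 ≥ N j0 + 3 : everything empty
        have hA : (range W).filter (ACond L N) = ∅ := by
          rw [Finset.eq_empty_iff_forall_notMem]
          intro j hj
          rw [Finset.mem_filter] at hj
          obtain ⟨h1, h2, h4, h5⟩ := hj.2
          by_cases hne : j = j0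
          · subst hne; omega
          · have := h5 j0 (Ne.symm hne); omega
        have hBf : (range W).filter (BCond L N) = ∅ := by
          rw [Finset.eq_empty_iff_forall_notMem]
          intro j hj
          rw [Finset.mem_filter] at hj
          obtain ⟨h1, h2, h4, h5⟩ := hj.2
          by_cases hne : j = j0
          · subst hne; omega
          · have := h5 j0 (Ne.symm hne); omega
        rw [hA, hBf]
        simp
    · -- two distinct bad columns
      push_neg at huniq
      obtain ⟨j1, hj1, hj1ne⟩ := huniq
      have hj1' := (memBad j1).1 hj1
      have hA : (range W).filter (ACond L N) = ∅ := by
        rw [Finset.eq_empty_iff_forall_notMem]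
        intro j hj
        rw [Finset.mem_filter] at hj
        obtain ⟨h1, h2, h4, h5⟩ := hj.2
        by_cases hne : j = j0
        · have := h5 j1 (by omega); omega
        · have := h5 j0 (Ne.symm hne); omega
      have hBf : (range W).filter (BCond L N) = ∅ := by
        rw [Finset.eq_empty_iff_forall_notMem]
        intro j hj
        rw [Finset.mem_filter] at hj
        obtain ⟨h1, h2, h4, h5⟩ := hj.2
        by_cases hne : j = j0
        · have := h5 j1 (by omega); omega
        · have := h5 j0 (Ne.symm hne); omega
      rw [hA, hBf]
      simp


/-! ### inserting a cell -/

lemma colLen_pos_iff {μ : YoungDiagram} {j : ℕ} : 0 < μ.colLen j ↔ j < μ.rowLen 0 := by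
  rw [← YoungDiagram.mem_iff_lt_colLen, ← YoungDiagram.mem_iff_lt_rowLen]

lemma rowLen_zero_mono {ν μ : YoungDiagram} (h : ν ≤ μ) : ν.rowLen 0 ≤ μ.rowLen 0 := by
  by_contra hc
  push_neg at hc
  have h1 : (0, μ.rowLen 0) ∈ ν := YoungDiagram.mem_iff_lt_rowLen.2 hc
  have h2 : (0, μ.rowLen 0) ∈ μ := h h1
  rw [YoungDiagram.mem_iff_lt_rowLen] at h2
  omega

noncomputable def insertC (ν : YoungDiagram) (c : ℕ × ℕ) : YoungDiagram :=
  if h : IsLowerSet (↑(insert c ν.cells) : Set (ℕ × ℕ)) then ⟨insert c ν.cells, h⟩ else ν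

lemma insertC_cells {ν : YoungDiagram} {c : ℕ × ℕ}
    (h : IsLowerSet (↑(insert c ν.cells) : Set (ℕ × ℕ))) :
    (insertC ν c).cells = insert c ν.cells := by
  rw [insertC, dif_pos h]

lemma insertC_eraseC {ρ : YoungDiagram} {c : ℕ × ℕ} (h : c ∈ corners ρ) :
    insertC (eraseC ρ c) c = ρ := by
  have hcm : c ∈ ρ.cells := (YoungDiagram.mem_cells _).2 (mem_corners.1 h).1
  have hcells : insert c (eraseC ρ c).cells = ρ.cells := by
    rw [eraseC_cells h]
    exact Finset.insert_erase hcm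
  have hls : IsLowerSet (↑(insert c (eraseC ρ c).cells) : Set (ℕ × ℕ)) := by
    rw [hcells]; exact ρ.isLowerSet
  apply cells_injective
  rw [insertC_cells hls, hcells]

lemma eraseC_insertC {ν : YoungDiagram} {c : ℕ × ℕ} (h1 : c ∉ ν)
    (h2 : IsLowerSet (↑(insert c ν.cells) : Set (ℕ × ℕ))) (h3 : c ∈ corners (insertC ν c)) :
    eraseC (insertC ν c) c = ν := by
  apply cells_injective
  rw [eraseC_cells h3, insertC_cells h2]
  exact Finset.erase_insert (fun hc => h1 ((YoungDiagram.mem_cells _).1 hc))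

noncomputable def addables (μ ν : YoungDiagram) : Finset (ℕ × ℕ) :=
  μ.cells.filter (fun c => c ∉ ν ∧ IsLowerSet (↑(insert c ν.cells) : Set (ℕ × ℕ)) ∧
    insertC ν c ∈ hstrips μ ∧ c ∈ corners (insertC ν c))

lemma mem_addables {μ ν : YoungDiagram} {c : ℕ × ℕ} :
    c ∈ addables μ ν ↔ c ∈ μ ∧ c ∉ ν ∧ IsLowerSet (↑(insert c ν.cells) : Set (ℕ × ℕ)) ∧
      insertC ν c ∈ hstrips μ ∧ c ∈ corners (insertC ν c) := by
  simp [addables, YoungDiagram.mem_cells]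

lemma colLen_insertC {ν : YoungDiagram} {j : ℕ}
    (h2 : IsLowerSet (↑(insert (ν.colLen j, j) ν.cells) : Set (ℕ × ℕ))) (j' : ℕ) :
    (insertC ν (ν.colLen j, j)).colLen j' = if j' = j then ν.colLen j + 1 else ν.colLen j' := by
  apply colLen_eq_of_iff
  intro k
  rw [← YoungDiagram.mem_cells, insertC_cells h2, Finset.mem_insert]
  rw [show ((k, j') ∈ ν.cells ↔ k < ν.colLen j') from
    (YoungDiagram.mem_cells _).trans YoungDiagram.mem_iff_lt_colLen]
  constructor
  · rintro (h | h)
    · rw [Prod.mk.injEq] at h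
      obtain ⟨hk, hj⟩ := h
      rw [if_pos hj]
      omega
    · split_ifs with hj
      · subst hj; omega
      · exact h
  · intro h
    split_ifs at h with hj
    · subst hj
      rcases Nat.lt_succ_iff_lt_or_eq.1 h with h | h
      · right; exact h
      · left; rw [h]
    · right; exact h

lemma mem_addables_iff {μ ν : YoungDiagram} (hν : ν ≤ μ) {i j : ℕ} :
    (i, j) ∈ addables μ ν ↔ i = ν.colLen j ∧ BCond μ.colLen ν.colLen j := by
  constructor
  · intro h
    obtain ⟨h1, h2, h3, h4, h5⟩ := mem_addables.1 h
    have hi : i = ν.colLen j := by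
      rw [YoungDiagram.mem_iff_lt_colLen] at h2
      push_neg at h2
      rcases Nat.eq_or_lt_of_le h2 with h | h
      · omega
      · exfalso
        have hmem : ((i, j) : ℕ × ℕ) ∈ (↑(insert (i, j) ν.cells) : Set (ℕ × ℕ)) := by
          rw [Finset.coe_insert]; exact Set.mem_insert _ _
        have hstep : ((i - 1, j) : ℕ × ℕ) ∈ (↑(insert (i, j) ν.cells) : Set (ℕ × ℕ)) :=
          h3 (Prod.mk_le_mk.2 ⟨by omega, le_rfl⟩) hmem
        rw [Finset.coe_insert, Set.mem_insert_iff] at hstep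
        rcases hstep with hh | hh
        · rw [Prod.mk.injEq] at hh; omega
        · rw [Finset.mem_coe, YoungDiagram.mem_cells, YoungDiagram.mem_iff_lt_colLen] at hh
          omega
    subst hi
    obtain ⟨hle, hstr⟩ := mem_hstrips.1 h4
    have hcolins := colLen_insertC h3
    refine ⟨rfl, ?_, ?_, ?_, ?_⟩
    · rwa [YoungDiagram.mem_iff_lt_colLen] at h1
    · rcases Nat.eq_zero_or_pos j with hj | hj
      · left; exact hj
      · right
        have hmem : ((ν.colLen j, j) : ℕ × ℕ) ∈ (↑(insert (ν.colLen j, j) ν.cells) : Set (ℕ × ℕ)) := by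
          rw [Finset.coe_insert]; exact Set.mem_insert _ _
        have hstep : ((ν.colLen j, j - 1) : ℕ × ℕ) ∈ (↑(insert (ν.colLen j, j) ν.cells) : Set (ℕ × ℕ)) :=
          h3 (Prod.mk_le_mk.2 ⟨le_rfl, by omega⟩) hmem
        rw [Finset.coe_insert, Set.mem_insert_iff] at hstep
        rcases hstep with hh | hh
        · rw [Prod.mk.injEq] at hh; omega
        · rw [Finset.mem_coe, YoungDiagram.mem_cells, YoungDiagram.mem_iff_lt_colLen] at hh
          omega
    · have := hstr j
      rw [hcolins j, if_pos rfl] at this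
      omega
    · intro j' hj'
      have := hstr j'
      rw [hcolins j', if_neg hj'] at this
      omega
  · rintro ⟨hi, hB⟩
    subst hi
    obtain ⟨b1, b2, b3, b4⟩ := hB
    have h3 : IsLowerSet (↑(insert (ν.colLen j, j) ν.cells) : Set (ℕ × ℕ)) := by
      intro a b hba ha
      rw [Finset.coe_insert, Set.mem_insert_iff] at ha ⊢
      rcases ha with ha | ha
      · subst ha
        by_cases hb : b = (ν.colLen j, j)
        · left; exact hb
        · right
          rw [Finset.mem_coe, YoungDiagram.mem_cells, YoungDiagram.mem_iff_lt_colLen]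
          obtain ⟨hb1, hb2⟩ := Prod.mk_le_mk.1 hba
          by_cases hbj : b.2 = j
          · have : b.1 ≠ ν.colLen j := by
              intro hc
              exact hb (Prod.ext hc hbj)
            rw [hbj]
            omega
          · have hblt : b.2 < j := by omega
            have hj0 : j ≠ 0 := by omega
            have hm1 : ν.colLen (j - 1) ≤ ν.colLen b.2 := ν.colLen_anti _ _ (by omega)
            have hm2 : ν.colLen j < ν.colLen (j - 1) := by tauto
            omega
      · right
        exact ν.isLowerSet hba ha
    have hcolins := colLen_insertC h3
    rw [mem_addables]
    refine ⟨?_, ?_, h3, ?_, ?_⟩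
    · rw [YoungDiagram.mem_iff_lt_colLen]; exact b1
    · rw [YoungDiagram.mem_iff_lt_colLen]; omega
    · rw [mem_hstrips]
      constructor
      · rw [le_iff_colLen]
        intro j'
        rw [hcolins j']
        split_ifs with hj'
        · subst hj'; omega
        · exact le_iff_colLen.1 hν j'
      · intro j'
        rw [hcolins j']
        split_ifs with hj'
        · subst hj'; omega
        · exact b4 j' hj'
    · rw [mem_corners_iff_colLen, hcolins j, if_pos rfl, hcolins (j + 1), if_neg (by omega)]
      have := ν.colLen_anti j (j + 1) (by omega)
      omega

lemma corner_filter_iff {μ ν : YoungDiagram} (hν : ν ≤ μ) {i j : ℕ} :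
    ((i, j) ∈ corners μ ∧ ν ∈ hstrips (eraseC μ (i, j))) ↔
      (i + 1 = μ.colLen j ∧ ACond μ.colLen ν.colLen j) := by
  constructor
  · rintro ⟨hc, hh⟩
    obtain ⟨hc1, hc2⟩ := mem_corners_iff_colLen.1 hc
    obtain ⟨hle, hstr⟩ := mem_hstrips.1 hh
    have hE := colLen_eraseC hc
    have hEj := hE j
    rw [if_pos rfl] at hEj
    have hlej : ν.colLen j ≤ (eraseC μ (i, j)).colLen j := le_iff_colLen.1 hle j
    have hstrj := hstr j
    refine ⟨hc1, by omega, hc2, by omega, ?_⟩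
    intro j' hj'
    have := hstr j'
    rw [hE j', if_neg (by simpa using hj')] at this
    omega
  · rintro ⟨h1, hA⟩
    obtain ⟨a1, a2, a3, a4⟩ := hA
    have hc : (i, j) ∈ corners μ := mem_corners_iff_colLen.2 ⟨h1, a2⟩
    have hE := colLen_eraseC hc
    refine ⟨hc, mem_hstrips.2 ⟨le_iff_colLen.2 ?_, ?_⟩⟩
    · intro j'
      rw [hE j']
      split_ifs with hj'
      · subst hj'; omega
      · exact le_iff_colLen.1 hν j'
    · intro j'
      rw [hE j']
      split_ifs with hj'
      · subst hj'; omega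
      · exact a4 j' (by simpa using hj')

lemma A_cols (d : ℕ) {μ ν : YoungDiagram} (hν : ν ≤ μ) :
    ∑ c ∈ (corners μ).filter (fun c => ν ∈ hstrips (eraseC μ c)), ((d : ℤ) + 1 + c.2 - c.1)
      = ∑ j ∈ (range (μ.rowLen 0)).filter (ACond μ.colLen ν.colLen),
          ((d : ℤ) + 2 + j - μ.colLen j) := by
  apply Finset.sum_nbij' (i := fun c => c.2) (j := fun j => (μ.colLen j - 1, j))
  · intro c hc
    rw [Finset.mem_filter] at hc
    obtain ⟨i, j⟩ := c
    obtain ⟨h1, hA⟩ := (corner_filter_iff hν).1 ⟨hc.1, hc.2⟩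
    dsimp only
    rw [Finset.mem_filter, Finset.mem_range, ← colLen_pos_iff]
    exact ⟨by omega, hA⟩
  · intro j hj
    rw [Finset.mem_filter] at hj
    have hpos : 0 < μ.colLen j := lt_of_le_of_lt (Nat.zero_le _) hj.2.1
    rw [Finset.mem_filter]
    have := (corner_filter_iff hν (i := μ.colLen j - 1) (j := j)).2 ⟨by omega, hj.2⟩
    exact ⟨this.1, this.2⟩
  · intro c hc
    rw [Finset.mem_filter] at hc
    obtain ⟨i, j⟩ := c
    obtain ⟨h1, hA⟩ := (corner_filter_iff hν).1 ⟨hc.1, hc.2⟩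
    dsimp only
    rw [Prod.mk.injEq]
    exact ⟨by omega, rfl⟩
  · intro j hj
    rfl
  · intro c hc
    rw [Finset.mem_filter] at hc
    obtain ⟨i, j⟩ := c
    obtain ⟨h1, hA⟩ := (corner_filter_iff hν).1 ⟨hc.1, hc.2⟩
    dsimp only
    have hcast : ((μ.colLen j - 1 : ℕ) : ℤ) = (μ.colLen j : ℤ) - 1 := by
      have : 1 ≤ μ.colLen j := by omega
      push_cast [this]
      ring
    have hi : (i : ℤ) = (μ.colLen j : ℤ) - 1 := by
      have : i = μ.colLen j - 1 := by omega
      rw [this, hcast]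
    rw [hi]
    ring

lemma B_cols (d : ℕ) {μ ν : YoungDiagram} (hν : ν ≤ μ) :
    ∑ c ∈ addables μ ν, ((d : ℤ) + c.2 - c.1)
      = ∑ j ∈ (range (μ.rowLen 0)).filter (BCond μ.colLen ν.colLen),
          ((d : ℤ) + j - ν.colLen j) := by
  apply Finset.sum_nbij' (i := fun c => c.2) (j := fun j => (ν.colLen j, j))
  · intro c hc
    obtain ⟨i, j⟩ := c
    obtain ⟨h1, hB⟩ := (mem_addables_iff hν).1 hc
    dsimp only
    rw [Finset.mem_filter, Finset.mem_range, ← colLen_pos_iff]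
    refine ⟨?_, hB⟩
    have := hB.1
    omega
  · intro j hj
    rw [Finset.mem_filter] at hj
    exact (mem_addables_iff hν).2 ⟨rfl, hj.2⟩
  · intro c hc
    obtain ⟨i, j⟩ := c
    obtain ⟨h1, hB⟩ := (mem_addables_iff hν).1 hc
    dsimp only
    rw [Prod.mk.injEq]
    exact ⟨h1.symm, rfl⟩
  · intro j hj
    rfl
  · intro c hc
    obtain ⟨i, j⟩ := c
    obtain ⟨h1, hB⟩ := (mem_addables_iff hν).1 hc
    dsimp only
    rw [h1]

lemma rho_sum (μ : YoungDiagram) (g : YoungDiagram → ℤ) (w : ℕ × ℕ → ℤ) :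
    ∑ ρ ∈ hstrips μ, ∑ c ∈ corners ρ, w c * g (eraseC ρ c)
      = ∑ ν ∈ allSub μ, ∑ c ∈ addables μ ν, w c * g ν := by
  rw [Finset.sum_sigma' (hstrips μ) (fun ρ => corners ρ) (fun ρ c => w c * g (eraseC ρ c)),
    Finset.sum_sigma' (allSub μ) (fun ν => addables μ ν) (fun ν c => w c * g ν)]
  apply Finset.sum_nbij' (i := fun x => ⟨eraseC x.1 x.2, x.2⟩) (j := fun y => ⟨insertC y.1 y.2, y.2⟩)
  · rintro ⟨ρ, c⟩ hx
    rw [Finset.mem_sigma] at hx ⊢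
    obtain ⟨hρ, hc⟩ := hx
    have hle : ρ ≤ μ := (mem_hstrips.1 hρ).1
    have hcm : c ∈ ρ.cells := (YoungDiagram.mem_cells _).2 (mem_corners.1 hc).1
    have hins : insert c (eraseC ρ c).cells = ρ.cells := by
      rw [eraseC_cells hc]
      exact Finset.insert_erase hcm
    have hIE := insertC_eraseC hc
    constructor
    · rw [mem_allSub]
      exact le_trans (eraseC_le c) hle
    · rw [mem_addables]
      refine ⟨hle ((YoungDiagram.mem_cells _).1 hcm), ?_, ?_, ?_, ?_⟩
      · intro hcon
        exact ((mem_eraseC hc).1 hcon).2 rfl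
      · rw [show (↑(insert c (eraseC ρ c).cells) : Set (ℕ × ℕ)) = ↑ρ.cells from by rw [hins]]
        exact ρ.isLowerSet
      · rw [hIE]; exact hρ
      · rw [hIE]; exact hc
  · rintro ⟨ν, c⟩ hy
    rw [Finset.mem_sigma] at hy ⊢
    obtain ⟨hν, hc⟩ := hy
    obtain ⟨h1, h2, h3, h4, h5⟩ := mem_addables.1 hc
    exact ⟨h4, h5⟩
  · rintro ⟨ρ, c⟩ hx
    rw [Finset.mem_sigma] at hx
    have h1 : insertC (eraseC ρ c) c = ρ := insertC_eraseC hx.2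
    exact Sigma.ext h1 (by rw [h1])
  · rintro ⟨ν, c⟩ hy
    rw [Finset.mem_sigma] at hy
    obtain ⟨h1, h2, h3, h4, h5⟩ := mem_addables.1 hy.2
    have he : eraseC (insertC ν c) c = ν := eraseC_insertC h2 h3 h5
    exact Sigma.ext he (by rw [he])
  · rintro ⟨ρ, c⟩ hx
    rfl

lemma mem_zero_zero {μ : YoungDiagram} (h : μ ≠ ⊥) : (0, 0) ∈ μ := by
  by_contra hc
  apply h
  ext c
  simp only [YoungDiagram.cells_bot, Finset.notMem_empty, iff_false]
  intro hcm
  exact hc (μ.up_left_mem (Nat.zero_le _) (Nat.zero_le _) ((YoungDiagram.mem_cells _).1 hcm))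

lemma sum_extend {α β : Type*} [AddCommMonoid β] {s t : Finset α} (h : t ⊆ s) (g : α → β) :
    ∑ x ∈ t, g x = ∑ x ∈ s, if x ∈ t then g x else 0 := by
  rw [Finset.sum_ite_mem, Finset.inter_eq_right.2 h]

theorem mrec_identity (d : ℕ) (μ : YoungDiagram) :
    ∑ c ∈ corners μ, ((d : ℤ) + c.2 - c.1) * (mrec d (eraseC μ c) : ℤ)
      = (μ.cells.card : ℤ) * (mrec d μ : ℤ) := by
  induction d generalizing μ with
  | zero =>
    by_cases hμ : μ = ⊥
    · subst hμ
      have hcor : corners (⊥ : YoungDiagram) = ∅ := by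
        rw [Finset.eq_empty_iff_forall_notMem]
        intro c hc
        exact (YoungDiagram.notMem_bot c) (mem_corners.1 hc).1
      rw [hcor, Finset.sum_empty]
      simp [YoungDiagram.cells_bot]
    · rw [mrec_zero, if_neg hμ]
      rw [Nat.cast_zero, mul_zero]
      apply Finset.sum_eq_zero
      intro c hc
      by_cases he : eraseC μ c = ⊥
      · have hsub : μ.cells ⊆ {c} := by
          intro x hx
          rw [Finset.mem_singleton]
          by_contra hne
          have hxe : x ∈ (eraseC μ c).cells := by
            rw [eraseC_cells hc]
            exact Finset.mem_erase.2 ⟨hne, hx⟩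
          rw [he] at hxe
          simp [YoungDiagram.cells_bot] at hxe
        have h00 : (0, 0) ∈ μ.cells := (YoungDiagram.mem_cells _).2 (mem_zero_zero hμ)
        have hc00 : c = (0, 0) := (Finset.mem_singleton.1 (hsub h00)).symm
        rw [hc00]
        norm_num
      · rw [mrec_zero, if_neg he]
        norm_num
  | succ d ih =>
    have hsub1 : ∀ c, hstrips (eraseC μ c) ⊆ allSub μ := by
      intro c ν hν
      rw [mem_allSub]
      exact le_trans (mem_hstrips.1 hν).1 (eraseC_le c)
    have hsub2 : hstrips μ ⊆ allSub μ := fun ν hν => mem_allSub.2 (mem_hstrips.1 hν).1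
    have hLHS : ∑ c ∈ corners μ, (((d + 1 : ℕ) : ℤ) + c.2 - c.1) * (mrec (d + 1) (eraseC μ c) : ℤ)
        = ∑ ν ∈ allSub μ, (∑ c ∈ (corners μ).filter (fun c => ν ∈ hstrips (eraseC μ c)),
            ((d : ℤ) + 1 + c.2 - c.1)) * (mrec d ν : ℤ) := by
      have e1 : ∀ c ∈ corners μ,
          (((d + 1 : ℕ) : ℤ) + c.2 - c.1) * (mrec (d + 1) (eraseC μ c) : ℤ)
          = ∑ ν ∈ allSub μ, (if ν ∈ hstrips (eraseC μ c) then
              ((d : ℤ) + 1 + c.2 - c.1) * (mrec d ν : ℤ) else 0) := by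
        intro c _
        rw [mrec_succ, Nat.cast_sum, Finset.mul_sum,
          sum_extend (hsub1 c) (fun ν => (((d + 1 : ℕ) : ℤ) + c.2 - c.1) * (mrec d ν : ℤ))]
        apply Finset.sum_congr rfl
        intro ν _
        have : (((d + 1 : ℕ) : ℤ) + c.2 - c.1) = ((d : ℤ) + 1 + c.2 - c.1) := by
          push_cast; ring
        rw [this]
      rw [Finset.sum_congr rfl e1, Finset.sum_comm]
      apply Finset.sum_congr rfl
      intro ν _
      rw [Finset.sum_mul, ← Finset.sum_filter]
    have hRHS : (μ.cells.card : ℤ) * (mrec (d + 1) μ : ℤ)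
        = ∑ ν ∈ allSub μ, ((∑ c ∈ addables μ ν, ((d : ℤ) + c.2 - c.1))
            + (if ν ∈ hstrips μ then ((μ.cells.card : ℤ) - ν.cells.card) else 0)) * (mrec d ν : ℤ) := by
      rw [mrec_succ, Nat.cast_sum, Finset.mul_sum]
      have e2 : ∀ ρ ∈ hstrips μ, (μ.cells.card : ℤ) * (mrec d ρ : ℤ)
          = ((μ.cells.card : ℤ) - ρ.cells.card) * (mrec d ρ : ℤ)
            + ∑ c ∈ corners ρ, ((d : ℤ) + c.2 - c.1) * (mrec d (eraseC ρ c) : ℤ) := by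
        intro ρ _
        rw [ih ρ]
        ring
      rw [Finset.sum_congr rfl e2, Finset.sum_add_distrib]
      rw [rho_sum μ (fun ν => (mrec d ν : ℤ)) (fun c => ((d : ℤ) + c.2 - c.1))]
      rw [sum_extend hsub2 (fun ρ => ((μ.cells.card : ℤ) - ρ.cells.card) * (mrec d ρ : ℤ))]
      have e3 : ∀ ν ∈ allSub μ, ((∑ c ∈ addables μ ν, ((d : ℤ) + c.2 - c.1))
            + (if ν ∈ hstrips μ then ((μ.cells.card : ℤ) - ν.cells.card) else 0)) * (mrec d ν : ℤ)
          = (∑ c ∈ addables μ ν, ((d : ℤ) + c.2 - c.1) * (mrec d ν : ℤ))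
            + (if ν ∈ hstrips μ then ((μ.cells.card : ℤ) - ν.cells.card) * (mrec d ν : ℤ) else 0) := by
        intro ν _
        rw [add_mul, Finset.sum_mul]
        congr 1
        split_ifs with h
        · rfl
        · rw [zero_mul]
      rw [Finset.sum_congr rfl e3, Finset.sum_add_distrib]
      exact add_comm _ _
    rw [hLHS, hRHS]
    apply Finset.sum_congr rfl
    intro ν hνmem
    have hν : ν ≤ μ := mem_allSub.1 hνmem
    congr 1
    rw [A_cols d hν, B_cols d hν]
    have hiff : ν ∈ hstrips μ ↔ ∀ j, μ.colLen j ≤ ν.colLen j + 1 := by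
      rw [mem_hstrips]
      exact and_iff_right hν
    have hval : (μ.cells.card : ℤ) - ν.cells.card
        = ∑ j ∈ range (μ.rowLen 0), ((μ.colLen j : ℤ) - ν.colLen j) := by
      rw [card_eq_sum_colLens μ le_rfl, card_eq_sum_colLens ν (rowLen_zero_mono hν)]
      push_cast
      rw [Finset.sum_sub_distrib]
    rw [if_congr hiff hval rfl]
    exact local_id μ.colLen ν.colLen d (μ.rowLen 0)
      (fun j => μ.colLen_anti j (j + 1) (by omega))
      (fun j => ν.colLen_anti j (j + 1) (by omega))
      (le_iff_colLen.1 hν)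
      (fun j hj => by
        by_contra hc
        have := colLen_pos_iff.1 (by omega : 0 < μ.colLen j)
        omega)

lemma dimGL_eq_mrec (d : ℕ) (μ : YoungDiagram) : dimGL d μ = mrec d μ := by
  induction d generalizing μ with
  | zero =>
    rw [dimGL_zero, mrec_zero]
  | succ d ih =>
    rw [dimGL_succ, mrec_succ]
    exact Finset.sum_congr rfl fun ν _ => ih ν

def truncate (μ : YoungDiagram) : YoungDiagram :=
  ⟨μ.cells.filter (fun c => c.1 + 1 < μ.colLen 0), by
    intro c2 c1 hle hc2
    simp only [Finset.coe_filter, Set.mem_setOf_eq, Finset.mem_coe] at hc2 ⊢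
    obtain ⟨h1, h2⟩ := hc2
    refine ⟨(YoungDiagram.mem_cells _).2
      (μ.up_left_mem hle.1 hle.2 ((YoungDiagram.mem_cells _).1 h1)), ?_⟩
    have := hle.1
    omega⟩

lemma mem_truncate {μ : YoungDiagram} {i j : ℕ} :
    (i, j) ∈ truncate μ ↔ (i, j) ∈ μ ∧ i + 1 < μ.colLen 0 := by
  show (i, j) ∈ Finset.filter _ _ ↔ _
  simp [Finset.mem_filter, YoungDiagram.mem_cells]

lemma colLen_truncate (μ : YoungDiagram) (j : ℕ) :
    (truncate μ).colLen j = min (μ.colLen j) (μ.colLen 0 - 1) := by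
  apply colLen_eq_of_iff
  intro i
  rw [mem_truncate, YoungDiagram.mem_iff_lt_colLen]
  have hle : μ.colLen j ≤ μ.colLen 0 := μ.colLen_anti 0 j (Nat.zero_le _)
  omega

lemma truncate_mem_hstrips (μ : YoungDiagram) : truncate μ ∈ hstrips μ := by
  rw [mem_hstrips]
  constructor
  · intro c hc
    obtain ⟨i, j⟩ := c
    have := mem_truncate.1 (by exact hc)
    exact this.1
  · intro j
    rw [colLen_truncate]
    have hle : μ.colLen j ≤ μ.colLen 0 := μ.colLen_anti 0 j (Nat.zero_le _)
    omega

lemma mrec_pos (d : ℕ) (μ : YoungDiagram) (h : μ.colLen 0 ≤ d) : 0 < mrec d μ := by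
  induction d generalizing μ with
  | zero =>
    have hb : μ = ⊥ := bot_of_colLen_zero (Nat.le_zero.1 h)
    rw [mrec_zero, if_pos hb]
    norm_num
  | succ d ih =>
    rw [mrec_succ]
    apply Finset.sum_pos' (fun ν _ => Nat.zero_le _)
    refine ⟨truncate μ, truncate_mem_hstrips μ, ih _ ?_⟩
    rw [colLen_truncate]
    omega

/-! ### oneBoxRemovals as corner erasures -/

lemma eraseC_injOn {μ : YoungDiagram} :
    ∀ x ∈ corners μ, ∀ y ∈ corners μ, eraseC μ x = eraseC μ y → x = y := by
  intro x hx y hy h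
  by_contra hne
  have hxc : x ∈ μ.cells := (YoungDiagram.mem_cells _).2 (mem_corners.1 hx).1
  have h1 : x ∈ μ.cells.erase y := Finset.mem_erase.2 ⟨fun hc => hne hc, hxc⟩
  have h2 : (eraseC μ x).cells = (eraseC μ y).cells := by rw [h]
  rw [eraseC_cells hx, eraseC_cells hy] at h2
  rw [← h2] at h1
  exact (Finset.notMem_erase x _) h1

lemma oneBox_eq (μ : YoungDiagram) :
    oneBoxRemovals μ = ↑((corners μ).image (fun c => eraseC μ c)) := by
  ext β
  simp only [oneBoxRemovals, Set.mem_setOf_eq, Finset.coe_image, Set.mem_image, Finset.mem_coe]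
  constructor
  · rintro ⟨hsub, hcard⟩
    have hne : β.cells ≠ μ.cells := fun h => by rw [h] at hcard; omega
    obtain ⟨c, hcμ, hcβ⟩ := Finset.exists_of_ssubset (ssubset_of_subset_of_ne hsub hne)
    have hsub' : β.cells ⊆ μ.cells.erase c := by
      intro x hx
      exact Finset.mem_erase.2 ⟨fun hc => hcβ (hc ▸ hx), hsub hx⟩
    have hbe : β.cells = μ.cells.erase c := by
      apply Finset.eq_of_subset_of_card_le hsub'
      rw [Finset.card_erase_of_mem hcμ]
      omega
    have hcor : c ∈ corners μ := by
      rw [mem_corners]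
      refine ⟨(YoungDiagram.mem_cells _).1 hcμ, ?_, ?_⟩
      · intro hc
        have hmem : (c.1 + 1, c.2) ∈ β.cells := by
          rw [hbe]
          refine Finset.mem_erase.2 ⟨?_, (YoungDiagram.mem_cells _).2 hc⟩
          intro h
          have := congrArg Prod.fst h
          simp at this
        have : c ∈ β.cells := by
          have := β.up_left_mem (show c.1 ≤ c.1 + 1 by omega) le_rfl
            ((YoungDiagram.mem_cells _).1 hmem)
          exact (YoungDiagram.mem_cells _).2 (by simpa using this)
        exact hcβ this
      · intro hc
        have hmem : (c.1, c.2 + 1) ∈ β.cells := by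
          rw [hbe]
          refine Finset.mem_erase.2 ⟨?_, (YoungDiagram.mem_cells _).2 hc⟩
          intro h
          have := congrArg Prod.snd h
          simp at this
        have : c ∈ β.cells := by
          have := β.up_left_mem le_rfl (show c.2 ≤ c.2 + 1 by omega)
            ((YoungDiagram.mem_cells _).1 hmem)
          exact (YoungDiagram.mem_cells _).2 (by simpa using this)
        exact hcβ this
    exact ⟨c, hcor, cells_injective (by rw [eraseC_cells hcor, hbe])⟩
  · rintro ⟨c, hc, rfl⟩
    have hcm : c ∈ μ.cells := (YoungDiagram.mem_cells _).2 (mem_corners.1 hc).1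
    constructor
    · rw [eraseC_cells hc]
      exact Finset.erase_subset _ _
    · rw [eraseC_cells hc, Finset.card_erase_of_mem hcm]
      have : 0 < μ.cells.card := Finset.card_pos.2 ⟨c, hcm⟩
      omega

lemma finsum_oneBox (d : ℕ) (μ : YoungDiagram) :
    ∑ᶠ β ∈ oneBoxRemovals μ, (dimGL d β : ℚ)
      = ∑ c ∈ corners μ, (dimGL d (eraseC μ c) : ℚ) := by
  rw [oneBox_eq, finsum_mem_coe_finset, Finset.sum_image eraseC_injOn]

/-! ### column diagrams -/

lemma mem_columnDiagram {n : ℕ} {c : ℕ × ℕ} :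
    c ∈ columnDiagram n ↔ c.1 < n ∧ c.2 = 0 := by
  rw [columnDiagram, YoungDiagram.mem_ofRowLens]
  simp only [List.length_replicate, List.get_eq_getElem, List.getElem_replicate, exists_prop]
  omega

lemma colLen_columnDiagram (n j : ℕ) :
    (columnDiagram n).colLen j = if j = 0 then n else 0 := by
  apply colLen_eq_of_iff
  intro i
  rw [mem_columnDiagram]
  split_ifs with h
  · simp [h]
  · simp [h]

lemma columnDiagram_zero : columnDiagram 0 = ⊥ := by
  apply eq_of_colLen_eq
  intro j
  rw [colLen_columnDiagram]
  have : ∀ j', (⊥ : YoungDiagram).colLen j' = 0 := by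
    intro j'
    apply colLen_eq_of_iff
    intro i
    simp [YoungDiagram.notMem_bot]
  rw [this]
  split_ifs <;> rfl

lemma columnDiagram_card (n : ℕ) : (columnDiagram n).cells.card = n := by
  have hrl : (columnDiagram n).rowLen 0 ≤ 1 := by
    by_contra hc
    push_neg at hc
    have : ((0 : ℕ), (1 : ℕ)) ∈ columnDiagram n := YoungDiagram.mem_iff_lt_rowLen.2 hc
    rw [mem_columnDiagram] at this
    omega
  rw [card_eq_sum_colLens _ hrl]
  simp [colLen_columnDiagram]

lemma hstrips_bot : hstrips (⊥ : YoungDiagram) = {(⊥ : YoungDiagram)} := by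
  ext ν
  rw [mem_hstrips, Finset.mem_singleton]
  constructor
  · rintro ⟨h1, _⟩
    exact le_bot_iff.1 h1
  · rintro rfl
    refine ⟨le_rfl, fun j => ?_⟩
    omega

lemma sub_column {n : ℕ} {ν : YoungDiagram} (h : ν ≤ columnDiagram n) :
    ν = columnDiagram (ν.colLen 0) := by
  apply eq_of_colLen_eq
  intro j
  rw [colLen_columnDiagram]
  split_ifs with hj
  · rw [hj]
  · have h1 : ν.colLen j ≤ (columnDiagram n).colLen j := le_iff_colLen.1 h j
    rw [colLen_columnDiagram, if_neg hj] at h1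
    omega

lemma hstrips_column (k : ℕ) :
    hstrips (columnDiagram (k + 1)) = {columnDiagram (k + 1), columnDiagram k} := by
  ext ν
  rw [mem_hstrips, Finset.mem_insert, Finset.mem_singleton]
  constructor
  · rintro ⟨h1, h2⟩
    have hcol := h2 0
    rw [colLen_columnDiagram, if_pos rfl] at hcol
    have hup : ν.colLen 0 ≤ (columnDiagram (k + 1)).colLen 0 := le_iff_colLen.1 h1 0
    rw [colLen_columnDiagram, if_pos rfl] at hup
    have heq := sub_column h1
    rcases Nat.eq_or_lt_of_le hup with h | h
    · left; rw [heq, h]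
    · right; rw [heq]
      congr 1
      omega
  · rintro (rfl | rfl)
    · exact ⟨le_rfl, fun j => by omega⟩
    · refine ⟨le_iff_colLen.2 fun j => ?_, fun j => ?_⟩
      · rw [colLen_columnDiagram, colLen_columnDiagram]
        split_ifs <;> omega
      · rw [colLen_columnDiagram, colLen_columnDiagram]
        split_ifs <;> omega

lemma columnDiagram_ne (k : ℕ) : columnDiagram (k + 1) ≠ columnDiagram k := by
  intro h
  have h2 : (columnDiagram (k + 1)).colLen 0 = (columnDiagram k).colLen 0 := by rw [h]
  rw [colLen_columnDiagram, colLen_columnDiagram, if_pos rfl, if_pos rfl] at h2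
  omega

lemma mrec_column (d k : ℕ) : mrec d (columnDiagram k) = Nat.choose d k := by
  induction d generalizing k with
  | zero =>
    rw [mrec_zero]
    cases k with
    | zero => rw [if_pos columnDiagram_zero]; rfl
    | succ k =>
      rw [if_neg, Nat.choose_eq_zero_of_lt (by omega)]
      intro hc
      have : ((0 : ℕ), (0 : ℕ)) ∈ columnDiagram (k + 1) := mem_columnDiagram.2 ⟨by omega, rfl⟩
      rw [hc] at this
      exact YoungDiagram.notMem_bot _ this
  | succ d ih =>
    cases k with
    | zero =>
      rw [columnDiagram_zero, mrec_succ, hstrips_bot, Finset.sum_singleton,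
        ← columnDiagram_zero, ih 0]
      simp
    | succ k =>
      rw [mrec_succ, hstrips_column k, Finset.sum_insert (by
        rw [Finset.mem_singleton]; exact columnDiagram_ne k), Finset.sum_singleton, ih, ih,
        Nat.choose_succ_succ]
      simp only [Nat.succ_eq_add_one]
      omega

lemma corners_column (k : ℕ) : corners (columnDiagram (k + 1)) = {(k, 0)} := by
  ext c
  obtain ⟨i, j⟩ := c
  rw [mem_corners_iff_colLen, Finset.mem_singleton, Prod.mk.injEq]
  rw [colLen_columnDiagram, colLen_columnDiagram]
  constructor
  · rintro ⟨h1, h2⟩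
    split_ifs at h1 h2 with hj hj1 <;> omega
  · rintro ⟨rfl, rfl⟩
    norm_num

lemma eraseC_column (k : ℕ) : eraseC (columnDiagram (k + 1)) (k, 0) = columnDiagram k := by
  have hc : ((k : ℕ), (0 : ℕ)) ∈ corners (columnDiagram (k + 1)) := by
    rw [corners_column]; exact Finset.mem_singleton_self _
  apply eq_of_colLen_eq
  intro j
  rw [colLen_eraseC hc j, colLen_columnDiagram, colLen_columnDiagram]
  split_ifs <;> omega

end CR

/-- For every partition `λ` of `n ≤ d` with at most `d` rows,
`c(λ) := (Σ_{β ∈ λ} m_β)/m_λ ≤ n/(d−n+1)`, with equality for the column `λ = [1^{×n}]`. -/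
theorem cRatio_le_column (d n : ℕ) (hnd : n ≤ d) :
    (∀ μ : YoungDiagram, μ.cells.card = n → μ.colLen 0 ≤ d →
        cRatio d μ ≤ (n : ℚ) / ((d : ℚ) - (n : ℚ) + 1)) ∧
    cRatio d (columnDiagram n) = (n : ℚ) / ((d : ℚ) - (n : ℚ) + 1) := by
  classical
  have hdQ : (0 : ℚ) < (d : ℚ) - (n : ℚ) + 1 := by
    have : (n : ℚ) ≤ (d : ℚ) := by exact_mod_cast hnd
    linarith
  constructor
  · intro μ hcard hcol
    have hm : 0 < CR.mrec d μ := CR.mrec_pos d μ hcol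
    have hid := CR.mrec_identity d μ
    rw [hcard] at hid
    have hcoln : μ.colLen 0 ≤ n := hcard ▸ CR.colLen_le_card μ 0
    have hineq : ((d : ℤ) - n + 1) * (∑ c ∈ CR.corners μ, (CR.mrec d (CR.eraseC μ c) : ℤ))
        ≤ (n : ℤ) * (CR.mrec d μ : ℤ) := by
      rw [← hid, Finset.mul_sum]
      apply Finset.sum_le_sum
      intro c hc
      obtain ⟨i, j⟩ := c
      obtain ⟨h1, _⟩ := CR.mem_corners_iff_colLen.1 hc
      have h2 : μ.colLen j ≤ μ.colLen 0 := μ.colLen_anti 0 j (Nat.zero_le _)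
      have hw : ((d : ℤ) - n + 1) ≤ ((d : ℤ) + (i, j).2 - (i, j).1) := by
        dsimp only
        have : i + 1 ≤ n := by omega
        have hcast : (i : ℤ) + 1 ≤ (n : ℤ) := by exact_mod_cast this
        have hj : (0 : ℤ) ≤ (j : ℤ) := Int.natCast_nonneg j
        linarith
      exact mul_le_mul_of_nonneg_right hw (Int.natCast_nonneg _)
    have hQ : ((d : ℚ) - n + 1) * (∑ c ∈ CR.corners μ, (CR.mrec d (CR.eraseC μ c) : ℚ))
        ≤ (n : ℚ) * (CR.mrec d μ : ℚ) := by
      exact_mod_cast hineq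
    unfold cRatio
    rw [CR.finsum_oneBox]
    have hmQ : (0 : ℚ) < (dimGL d μ : ℚ) := by
      rw [CR.dimGL_eq_mrec]
      exact_mod_cast hm
    rw [div_le_div_iff₀ hmQ hdQ]
    simp only [CR.dimGL_eq_mrec]
    calc (∑ c ∈ CR.corners μ, (CR.mrec d (CR.eraseC μ c) : ℚ)) * ((d : ℚ) - n + 1)
        = ((d : ℚ) - n + 1) * (∑ c ∈ CR.corners μ, (CR.mrec d (CR.eraseC μ c) : ℚ)) := by ring
      _ ≤ (n : ℚ) * (CR.mrec d μ : ℚ) := hQ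
  · rcases n with _ | k
    · have h0 : CR.corners (columnDiagram 0) = ∅ := by
        rw [CR.columnDiagram_zero, Finset.eq_empty_iff_forall_notMem]
        intro c hc
        exact YoungDiagram.notMem_bot c (CR.mem_corners.1 hc).1
      unfold cRatio
      rw [CR.finsum_oneBox, h0, Finset.sum_empty, zero_div]
      norm_num
    · unfold cRatio
      rw [CR.finsum_oneBox, CR.corners_column k, Finset.sum_singleton, CR.eraseC_column k]
      rw [CR.dimGL_eq_mrec, CR.dimGL_eq_mrec, CR.mrec_column, CR.mrec_column]
      have hd1 : ((d : ℚ) - ((k + 1 : ℕ) : ℚ) + 1) = ((d - k : ℕ) : ℚ) := by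
        rw [Nat.cast_sub (by omega : k ≤ d)]
        push_cast
        ring
      rw [hd1]
      have hp1 : ((Nat.choose d (k + 1) : ℕ) : ℚ) ≠ 0 := by
        have : 0 < Nat.choose d (k + 1) := Nat.choose_pos (by omega)
        exact_mod_cast this.ne'
      have hp2 : ((d - k : ℕ) : ℚ) ≠ 0 := by
        have : 0 < d - k := by omega
        exact_mod_cast this.ne'
      rw [div_eq_div_iff hp1 hp2]
      have hnat : Nat.choose d k * (d - k) = (k + 1) * Nat.choose d (k + 1) := by
        rw [← Nat.choose_succ_right_eq, Nat.mul_comm]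
      exact_mod_cast hnat
end

section
/- Vershik's identity: for a partition λ of n with step representation (k₁,p₁,…,k_s,p_s) and corner boxes c₁,…,c_s, one has Σ_{j=1}^s k_j p_j Π_{i<j} (1 + k_i/d(c_i,c_j)) Π_{i>j} (1 + p_i/d(c_j,c_i)) = n, where d(b₁,b₂) := |i₁−i₂| + |j₁−j₂| is the axial distance between boxes. -/
open Finset

/-- Row coordinate (1-based) of the `j`-th corner box of the Young diagram with step
representation `(k₁,p₁,…,k_s,p_s)`: `i_{c_j} = k₁ + … + k_j`. -/
def cornerRow {s : ℕ} (k : Fin s → ℕ) (j : Fin s) : ℕ :=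
  ∑ i ∈ Finset.univ.filter (· ≤ j), k i

/-- Column coordinate (1-based) of the `j`-th corner box:
`j_{c_j} = p_j + p_{j+1} + … + p_s`. -/
def cornerCol {s : ℕ} (p : Fin s → ℕ) (j : Fin s) : ℕ :=
  ∑ i ∈ Finset.univ.filter (j ≤ ·), p i

/-- Axial distance `d(c_a, c_b) = |i_{c_a} − i_{c_b}| + |j_{c_a} − j_{c_b}|` between
corner boxes `c_a` and `c_b`. -/
def axialDist {s : ℕ} (k p : Fin s → ℕ) (a b : Fin s) : ℚ :=
  |(cornerRow k a : ℚ) - (cornerRow k b : ℚ)| + |(cornerCol p a : ℚ) - (cornerCol p b : ℚ)|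


open Polynomial


lemma vpf_monic {ι : Type*} (s : Finset ι) (v : ι → ℚ) : (∏ i ∈ s, (X - C (v i))).Monic :=
  monic_prod_of_monic _ _ fun i _ => monic_X_sub_C _

lemma vpf_natDegree {ι : Type*} (s : Finset ι) (v : ι → ℚ) :
    (∏ i ∈ s, (X - C (v i))).natDegree = s.card := by
  rw [natDegree_prod_of_monic _ _ fun i _ => monic_X_sub_C _]
  simp

lemma vpf_coeff_card {ι : Type*} (s : Finset ι) (v : ι → ℚ) :
    (∏ i ∈ s, (X - C (v i))).coeff s.card = 1 := by
  have h := (vpf_monic s v).coeff_natDegree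
  rwa [vpf_natDegree] at h

lemma vpf_C1 : ∀ (m : ℕ) (v : Fin (m+1) → ℚ),
    (∏ i, (X - C (v i))).coeff m = -∑ i, v i := by
  intro m
  induction m with
  | zero => intro v; simp [Fin.prod_univ_one]
  | succ m ih =>
    intro v
    rw [Fin.prod_univ_castSucc]
    set Q := ∏ i : Fin (m+1), (X - C (v i.castSucc)) with hQ
    have hQtop : Q.coeff (m+1) = 1 := by
      have := vpf_coeff_card (univ : Finset (Fin (m+1))) (fun i => v i.castSucc)
      simpa using this
    have hsum : ∑ i : Fin (m+2), v i
        = (∑ i : Fin (m+1), v i.castSucc) + v (Fin.last (m+1)) := Fin.sum_univ_castSucc v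
    rw [mul_sub, coeff_sub, coeff_mul_X, coeff_mul_C, hQtop, ih, hsum]
    ring

lemma vpf_C2 : ∀ (m : ℕ) (v : Fin (m+2) → ℚ),
    (∏ i, (X - C (v i))).coeff m = ((∑ i, v i)^2 - ∑ i, (v i)^2)/2 := by
  intro m
  induction m with
  | zero =>
    intro v
    rw [Fin.prod_univ_two, mul_coeff_zero]
    simp only [coeff_sub, coeff_X_zero, coeff_C_zero, Fin.sum_univ_succ, Fin.sum_univ_zero, Fin.succ_zero_eq_one]
    ring
  | succ m ih =>
    intro v
    rw [Fin.prod_univ_castSucc]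
    set Q := ∏ i : Fin (m+2), (X - C (v i.castSucc)) with hQ
    have h1 : Q.coeff (m+1) = -∑ i : Fin (m+2), v i.castSucc := vpf_C1 (m+1) _
    have hsum : ∑ i : Fin (m+3), v i
        = (∑ i : Fin (m+2), v i.castSucc) + v (Fin.last (m+2)) := Fin.sum_univ_castSucc v
    have hsum2 : ∑ i : Fin (m+3), (v i)^2
        = (∑ i : Fin (m+2), (v i.castSucc)^2) + (v (Fin.last (m+2)))^2 :=
      Fin.sum_univ_castSucc (fun i => (v i)^2)
    rw [mul_sub, coeff_sub, coeff_mul_X, coeff_mul_C, h1, ih, hsum, hsum2]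
    ring



lemma vpf_interp (m : ℕ) (t : Fin (m+1) → ℚ) (ht : Function.Injective t) (r : ℚ[X])
    (hr : r.degree < (m+1 : ℕ)) :
    ∑ j, r.eval (t j) / ∏ i ∈ univ.erase j, (t j - t i) = r.coeff m := by
  have hcard : (univ : Finset (Fin (m+1))).card = m+1 := by simp
  have heq : r = Lagrange.interpolate univ t (fun i => r.eval (t i)) :=
    Lagrange.eq_interpolate ht.injOn (by rw [hcard]; exact_mod_cast hr)
  conv_rhs => rw [heq]
  rw [Lagrange.interpolate_apply, finset_sum_coeff]
  refine Finset.sum_congr rfl fun j _ => ?_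
  rw [coeff_C_mul]
  have hb0 : Lagrange.basis univ t j
      = C (∏ i ∈ univ.erase j, (t j - t i)⁻¹) * ∏ i ∈ univ.erase j, (X - C (t i)) := by
    rw [Lagrange.basis, map_prod, ← prod_mul_distrib]
    exact Finset.prod_congr rfl fun i _ => rfl
  have hce : (univ.erase j).card = m := by rw [card_erase_of_mem (mem_univ j), hcard]; omega
  have h1 : (∏ i ∈ univ.erase j, (X - C (t i))).coeff m = 1 := by
    have := vpf_coeff_card (univ.erase j) t
    rwa [hce] at this
  rw [hb0, coeff_C_mul, h1, mul_one, div_eq_mul_inv, ← Finset.prod_inv_distrib]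



lemma vpf_xg : ∀ (m : ℕ) (t : Fin (m+1) → ℚ),
    (X * ∏ j, (X - C (t j))).coeff m = ((∑ j, t j)^2 - ∑ j, (t j)^2)/2
  | 0, t => by
    rw [mul_coeff_zero, coeff_X_zero, zero_mul]
    have h1 : ∑ j : Fin 1, t j = t 0 := Fin.sum_univ_one t
    have h2 : ∑ j : Fin 1, (t j)^2 = (t 0)^2 := Fin.sum_univ_one _
    rw [h1, h2]; ring
  | (m+1), t => by
    rw [coeff_X_mul, vpf_C2 m t]

lemma vpf_core (m : ℕ) (t : Fin (m+1) → ℚ) (u : Fin (m+2) → ℚ)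
    (ht : Function.Injective t) (he : ∑ i, u i = ∑ j, t j) :
    ∑ j, (∏ i, (t j - u i)) / (∏ i ∈ univ.erase j, (t j - t i))
      = (∑ j, (t j)^2 - ∑ i, (u i)^2)/2 := by
  set f : ℚ[X] := ∏ i, (X - C (u i)) with hf
  set g : ℚ[X] := ∏ j, (X - C (t j)) with hg
  have hfdeg : f.natDegree = m+2 := by
    rw [hf, vpf_natDegree]; simp
  have hgdeg : g.natDegree = m+1 := by
    rw [hg, vpf_natDegree]; simp
  have hftop : f.coeff (m+2) = 1 := by
    have := vpf_coeff_card (univ : Finset (Fin (m+2))) u; simpa using this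
  have hgtop : g.coeff (m+1) = 1 := by
    have := vpf_coeff_card (univ : Finset (Fin (m+1))) t; simpa using this
  have hf1 : f.coeff (m+1) = -∑ i, u i := vpf_C1 (m+1) u
  have hg1 : g.coeff m = -∑ j, t j := vpf_C1 m t
  have hdeg : (f - X * g).degree < ((m+1 : ℕ) : WithBot ℕ) := by
    rw [degree_lt_iff_coeff_zero]
    intro d hd
    rw [coeff_sub]
    rcases Nat.exists_eq_add_of_le hd with ⟨e, rfl⟩
    match e with
    | 0 => rw [coeff_X_mul, hf1, hg1, he]; ring
    | 1 => rw [show m+1+1 = (m+1)+1 by ring, coeff_X_mul, hftop, hgtop]; ring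
    | (e+2) =>
      have h1 : f.coeff (m+1+(e+2)) = 0 :=
        coeff_eq_zero_of_natDegree_lt (by omega)
      have h2 : (X * g).coeff (m+1+(e+2)) = 0 := by
        rw [show m+1+(e+2) = (m+2+e)+1 by ring, coeff_X_mul]
        exact coeff_eq_zero_of_natDegree_lt (by omega)
      rw [h1, h2]; ring
  have heval : ∀ j, (f - X * g).eval (t j) = ∏ i, (t j - u i) := by
    intro j
    have hgz : g.eval (t j) = 0 := by
      rw [hg, eval_prod]
      exact Finset.prod_eq_zero (mem_univ j) (by simp)
    rw [eval_sub, eval_mul, hgz, mul_zero, sub_zero, hf, eval_prod]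
    simp
  have hstep : ∑ j, (∏ i, (t j - u i)) / (∏ i ∈ univ.erase j, (t j - t i))
      = (f - X * g).coeff m := by
    rw [← vpf_interp m t ht (f - X * g) hdeg]
    exact Finset.sum_congr rfl fun j _ => by rw [heval j]
  rw [hstep, coeff_sub, vpf_C2 m u, hg, vpf_xg m t, he]
  ring

def vA {s : ℕ} (k : Fin s → ℕ) (m : ℕ) : ℚ :=
  ∑ j ∈ univ.filter (fun j : Fin s => (j : ℕ) < m), (k j : ℚ)
def vB {s : ℕ} (p : Fin s → ℕ) (m : ℕ) : ℚ :=
  ∑ j ∈ univ.filter (fun j : Fin s => m ≤ (j : ℕ)), (p j : ℚ)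

lemma vA_zero {s : ℕ} (k : Fin s → ℕ) : vA k 0 = 0 := by simp [vA]

lemma vB_top {s : ℕ} (p : Fin s → ℕ) : vB p s = 0 := by
  unfold vB
  have h : univ.filter (fun j : Fin s => s ≤ (j : ℕ)) = ∅ := by
    ext i; simp only [mem_filter, mem_univ, true_and, Finset.notMem_empty, iff_false, not_le]
    exact i.isLt
  rw [h, Finset.sum_empty]

lemma vA_succ {s : ℕ} (k : Fin s → ℕ) {m : ℕ} (hm : m < s) :
    vA k (m+1) = vA k m + (k ⟨m, hm⟩ : ℚ) := by
  unfold vA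
  have h : univ.filter (fun j : Fin s => (j : ℕ) < m+1)
      = insert ⟨m, hm⟩ (univ.filter (fun j : Fin s => (j : ℕ) < m)) := by
    ext i
    simp [Nat.lt_succ_iff_lt_or_eq, Fin.ext_iff, or_comm]
    omega
  rw [h, Finset.sum_insert (by simp)]
  ring

lemma vB_succ {s : ℕ} (p : Fin s → ℕ) {m : ℕ} (hm : m < s) :
    vB p m = (p ⟨m, hm⟩ : ℚ) + vB p (m+1) := by
  unfold vB
  have h : univ.filter (fun j : Fin s => m ≤ (j : ℕ))
      = insert ⟨m, hm⟩ (univ.filter (fun j : Fin s => m+1 ≤ (j : ℕ))) := by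
    ext i
    simp only [mem_filter, mem_univ, true_and, mem_insert, Fin.ext_iff]
    omega
  rw [h, Finset.sum_insert (by simp)]

lemma vA_mono {s : ℕ} (k : Fin s → ℕ) {m m' : ℕ} (h : m ≤ m') : vA k m ≤ vA k m' := by
  apply Finset.sum_le_sum_of_subset_of_nonneg
  · intro i hi; simp only [mem_filter, mem_univ, true_and] at hi ⊢; omega
  · intro i _ _; positivity

lemma vB_anti {s : ℕ} (p : Fin s → ℕ) {m m' : ℕ} (h : m ≤ m') : vB p m' ≤ vB p m := by
  apply Finset.sum_le_sum_of_subset_of_nonneg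
  · intro i hi; simp only [mem_filter, mem_univ, true_and] at hi ⊢; omega
  · intro i _ _; positivity

lemma vB_strict {s : ℕ} (p : Fin s → ℕ) (hp : ∀ i, 1 ≤ p i) {i j : ℕ}
    (hij : i < j) (hj : j ≤ s) : vB p j + 1 ≤ vB p i := by
  have hi : i < s := lt_of_lt_of_le hij hj
  rw [vB_succ p hi]
  have h1 : vB p j ≤ vB p (i+1) := vB_anti p hij
  have h2 : (1 : ℚ) ≤ (p ⟨i, hi⟩ : ℚ) := by exact_mod_cast hp _
  linarith

lemma cornerRow_cast {s : ℕ} (k : Fin s → ℕ) (a : Fin s) :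
    (cornerRow k a : ℚ) = vA k (a + 1) := by
  unfold cornerRow vA
  rw [Nat.cast_sum]
  apply Finset.sum_congr
  · ext i
    simp only [mem_filter, mem_univ, true_and, Fin.le_def, Nat.lt_succ_iff]
  · intros; rfl

lemma cornerCol_cast {s : ℕ} (p : Fin s → ℕ) (a : Fin s) :
    (cornerCol p a : ℚ) = vB p a := by
  unfold cornerCol vB
  rw [Nat.cast_sum]
  apply Finset.sum_congr
  · ext i
    simp only [mem_filter, mem_univ, true_and, Fin.le_def]
  · intros; rfl


lemma vpf_split {s : ℕ} (j : Fin s) (G : Fin (s+1) → ℚ) :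
    ∏ i, G i = (∏ i ∈ univ.filter (· < j), G i.castSucc) * G j.castSucc * G j.succ
      * ∏ i ∈ univ.filter (j < ·), G i.succ := by
  rw [Fin.prod_univ_succAbove G j.castSucc]
  have hsa : ∀ i : Fin s, j.castSucc.succAbove i = if i < j then i.castSucc else i.succ := by
    intro i
    by_cases h : i < j
    · rw [if_pos h, Fin.succAbove_of_castSucc_lt]
      exact Fin.castSucc_lt_castSucc_iff.mpr h
    · rw [if_neg h, Fin.succAbove_of_le_castSucc]
      exact Fin.castSucc_le_castSucc_iff.mpr (not_lt.mp h)
  have h2 : ∏ i : Fin s, G (j.castSucc.succAbove i)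
      = (∏ i ∈ univ.filter (· < j), G i.castSucc) * ∏ i ∈ univ.filter (¬ · < j), G i.succ := by
    rw [← Finset.prod_filter_mul_prod_filter_not univ (· < j)]
    congr 1
    · exact Finset.prod_congr rfl fun i hi => by
        rw [hsa i, if_pos (by simpa using hi)]
    · exact Finset.prod_congr rfl fun i hi => by
        rw [hsa i, if_neg (by simpa using hi)]
  have h3 : univ.filter (fun i : Fin s => ¬ i < j) = insert j (univ.filter (j < ·)) := by
    ext i
    simp only [mem_filter, mem_univ, true_and, mem_insert, not_lt]
    rw [le_iff_lt_or_eq, or_comm, eq_comm]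
  rw [h2, h3, Finset.prod_insert (by simp)]
  ring

lemma vpf_erase {s : ℕ} (j : Fin s) (G : Fin s → ℚ) :
    ∏ i ∈ univ.erase j, G i
      = (∏ i ∈ univ.filter (· < j), G i) * ∏ i ∈ univ.filter (j < ·), G i := by
  have h : univ.erase j = univ.filter (· < j) ∪ univ.filter (j < ·) := by
    ext i
    simp only [mem_erase, mem_univ, and_true, mem_union, mem_filter, true_and]
    constructor
    · exact fun h => lt_or_gt_of_ne h
    · rintro (h | h) <;> [exact ne_of_lt h; exact ne_of_gt h]
  rw [h, Finset.prod_union]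
  rw [Finset.disjoint_filter]
  intro i _ h1 h2
  exact absurd (h1.trans h2) (lt_irrefl i)


def vT {s : ℕ} (k p : Fin s → ℕ) (j : Fin s) : ℚ := vA k (j + 1) - vB p j
def vU {s : ℕ} (k p : Fin s → ℕ) (i : Fin (s+1)) : ℚ := vA k i - vB p i

lemma vT_strictMono {s : ℕ} (k p : Fin s → ℕ) (hp : ∀ i, 1 ≤ p i) :
    StrictMono (vT k p) := by
  intro i j hij
  have hij' : (i : ℕ) < (j : ℕ) := hij
  have h1 : vA k (i+1) ≤ vA k (j+1) := vA_mono k (by omega)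
  have h2 : vB p (j : ℕ) + 1 ≤ vB p i := vB_strict p hp hij' j.isLt.le
  unfold vT
  linarith

lemma axial_lt {s : ℕ} (k p : Fin s → ℕ) {i j : Fin s} (hij : i < j) :
    axialDist k p i j = vT k p j - vT k p i := by
  unfold axialDist
  rw [cornerRow_cast, cornerRow_cast, cornerCol_cast, cornerCol_cast]
  have hij' : (i : ℕ) < (j : ℕ) := hij
  have h1 : vA k (i+1) ≤ vA k (j+1) := vA_mono k (by omega)
  have h2 : vB p (j : ℕ) ≤ vB p i := vB_anti p (by omega)
  rw [abs_of_nonpos (by linarith), abs_of_nonneg (by linarith)]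
  unfold vT
  ring

lemma kfact {s : ℕ} (k p : Fin s → ℕ) (j : Fin s) :
    (k j : ℚ) = vT k p j - vU k p j.castSucc := by
  simp only [vT, vU, Fin.coe_castSucc]
  rw [vA_succ k j.isLt]
  simp only [Fin.eta]
  ring

lemma pfact {s : ℕ} (k p : Fin s → ℕ) (j : Fin s) :
    (p j : ℚ) = vU k p j.succ - vT k p j := by
  simp only [vT, vU, Fin.val_succ]
  rw [vB_succ p j.isLt]
  simp only [Fin.eta]
  ring

lemma vpf_he {s : ℕ} (k p : Fin s → ℕ) :
    ∑ i, vU k p i = ∑ j, vT k p j := by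
  rw [Fin.sum_univ_succ (f := vU k p)]
  have h0 : vU k p 0 = -vB p 0 := by
    simp only [vU]
    rw [show ((0 : Fin (s+1)) : ℕ) = 0 from rfl, vA_zero]
    ring
  have htel : ∑ j : Fin s, (vU k p j.succ - vT k p j) = vB p 0 - vB p s := by
    have hcong : ∀ j : Fin s, vU k p j.succ - vT k p j = vB p (j : ℕ) - vB p ((j : ℕ)+1) := by
      intro j; simp only [vU, vT, Fin.val_succ]; ring
    rw [Finset.sum_congr rfl fun j _ => hcong j,
      Fin.sum_univ_eq_sum_range (fun m => vB p m - vB p (m+1)) s,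
      Finset.sum_range_sub' (fun m => vB p m)]
  rw [Finset.sum_sub_distrib] at htel
  rw [vB_top] at htel
  linarith

lemma vpf_hsq {s : ℕ} (k p : Fin s → ℕ) :
    ∑ i, (vU k p i)^2 - ∑ j, (vT k p j)^2
      = 2 * ∑ j, (cornerRow k j : ℚ) * (p j : ℚ) := by
  rw [Fin.sum_univ_succ (f := fun i => (vU k p i)^2)]
  have h0 : (vU k p 0)^2 = (vB p 0)^2 := by
    simp only [vU]
    rw [show ((0 : Fin (s+1)) : ℕ) = 0 from rfl, vA_zero]
    ring
  have key : ∀ j : Fin s, (vU k p j.succ)^2 - (vT k p j)^2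
      = 2*((cornerRow k j : ℚ)*(p j : ℚ)) - ((vB p (j:ℕ))^2 - (vB p ((j:ℕ)+1))^2) := by
    intro j
    have hP : (p j : ℚ) = vB p (j : ℕ) - vB p ((j : ℕ)+1) := by
      have := vB_succ p j.isLt
      simp only [Fin.eta] at this
      linarith
    rw [cornerRow_cast, hP]
    simp only [vU, vT, Fin.val_succ]
    ring
  have htel : ∑ j : Fin s, ((vB p (j:ℕ))^2 - (vB p ((j:ℕ)+1))^2) = (vB p 0)^2 - (vB p s)^2 := by
    rw [Fin.sum_univ_eq_sum_range (fun m => (vB p m)^2 - (vB p (m+1))^2) s,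
      Finset.sum_range_sub' (fun m => (vB p m)^2)]
  have hsum : ∑ j : Fin s, ((vU k p j.succ)^2 - (vT k p j)^2)
      = 2 * ∑ j, (cornerRow k j : ℚ) * (p j : ℚ)
        - ((vB p 0)^2 - (vB p s)^2) := by
    rw [Finset.sum_congr rfl fun j _ => key j, Finset.sum_sub_distrib, htel,
      ← Finset.mul_sum]
  rw [Finset.sum_sub_distrib] at hsum
  rw [vB_top] at hsum
  linarith

/-- Vershik's identity: for a partition of `n` with step representation
`(k₁,p₁,…,k_s,p_s)` (all `k_i, p_i ≥ 1`, with `n = Σ_{i≤j} k_i p_j`),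
`Σ_j k_j p_j Π_{i<j}(1 + k_i/d(c_i,c_j)) Π_{i>j}(1 + p_i/d(c_j,c_i)) = n`. -/
theorem vershik_identity (s : ℕ) (k p : Fin s → ℕ)
    (hk : ∀ i, 1 ≤ k i) (hp : ∀ i, 1 ≤ p i) (n : ℕ)
    (hn : n = ∑ j : Fin s, cornerRow k j * p j) :
    ∑ j : Fin s, (k j : ℚ) * (p j : ℚ)
        * (∏ i ∈ Finset.univ.filter (· < j), (1 + (k i : ℚ) / axialDist k p i j))
        * (∏ i ∈ Finset.univ.filter (j < ·), (1 + (p i : ℚ) / axialDist k p j i))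
      = (n : ℚ) := by
  obtain rfl | hs := Nat.eq_zero_or_pos s
  · simp only [Finset.univ_eq_empty, Finset.sum_empty] at hn ⊢
    simp [hn]
  obtain ⟨m, rfl⟩ := Nat.exists_eq_succ_of_ne_zero hs.ne'
  set t := vT k p with htdef
  set u := vU k p with hudef
  have htm : StrictMono t := vT_strictMono k p hp
  have hti : Function.Injective t := htm.injective
  have key : ∀ j : Fin (m+1), (k j : ℚ) * (p j : ℚ)
        * (∏ i ∈ Finset.univ.filter (· < j), (1 + (k i : ℚ) / axialDist k p i j))
        * (∏ i ∈ Finset.univ.filter (j < ·), (1 + (p i : ℚ) / axialDist k p j i))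
      = -((∏ i, (t j - u i)) / (∏ i ∈ univ.erase j, (t j - t i))) := by
    intro j
    have P1 : ∏ i ∈ Finset.univ.filter (· < j), (1 + (k i : ℚ) / axialDist k p i j)
        = ∏ i ∈ univ.filter (· < j), ((t j - u i.castSucc) / (t j - t i)) := by
      refine Finset.prod_congr rfl fun i hi => ?_
      have hij : i < j := by simpa using hi
      have hd : t j - t i ≠ 0 := sub_ne_zero.mpr (htm hij).ne'
      rw [axial_lt k p hij, kfact k p i]
      rw [← htdef, ← hudef]
      field_simp
      try ring
    have P2 : ∏ i ∈ Finset.univ.filter (j < ·), (1 + (p i : ℚ) / axialDist k p j i)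
        = ∏ i ∈ univ.filter (j < ·), ((t j - u i.succ) / (t j - t i)) := by
      refine Finset.prod_congr rfl fun i hi => ?_
      have hij : j < i := by simpa using hi
      have hd : t i - t j ≠ 0 := sub_ne_zero.mpr (htm hij).ne'
      have hd' : t j - t i ≠ 0 := sub_ne_zero.mpr (htm hij).ne
      rw [axial_lt k p hij, pfact k p i]
      rw [← htdef, ← hudef]
      field_simp
      try ring
    rw [P1, P2, Finset.prod_div_distrib, Finset.prod_div_distrib,
      vpf_erase j (fun i => t j - t i), vpf_split j (fun i => t j - u i),
      kfact k p j, pfact k p j]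
    have hD1 : ∏ i ∈ univ.filter (· < j), (t j - t i) ≠ 0 :=
      Finset.prod_ne_zero_iff.mpr fun i hi =>
        sub_ne_zero.mpr (htm (show i < j by simpa using hi)).ne'
    have hD2 : ∏ i ∈ univ.filter (j < ·), (t j - t i) ≠ 0 :=
      Finset.prod_ne_zero_iff.mpr fun i hi =>
        sub_ne_zero.mpr (htm (show j < i by simpa using hi)).ne
    field_simp
    try ring
  rw [Finset.sum_congr rfl fun j _ => key j, Finset.sum_neg_distrib,
    vpf_core m t u hti (vpf_he k p)]
  have hq := vpf_hsq k p
  have hncast : (n : ℚ) = ∑ j, (cornerRow k j : ℚ) * (p j : ℚ) := by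
    rw [hn]
    push_cast
    rfl
  rw [hncast]
  linarith
end
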